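/- arXiv:math/0108095 — 9 statements merged into one kernel-verified Lean document; each statement's English description precedes it below -/
import Mathlib

section
/- Let K, R be finite dimensional complex vector spaces of the same dimension d and let P(σ) : K → R be a holomorphic family of linear maps defined near σ₀ ∈ ℂ, invertible for σ ≠ σ₀, with P(σ₀) = 0. Then there exist meromorphic germs ψ₁,…,ψ_d at σ₀ with values in K such that each β_j(σ) = P(σ)ψ_j(σ) is holomorphic at σ₀ and β₁(σ₀),…,β_d(σ₀) form a basis of R. Moreover, for any such choice, if u is a K-valued meromorphic germ at σ₀ with P·u holomorphic at σ₀, then u = Σ_{j=1}^d f_j ψ_j for some holomorphic germs f_j. -/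
open Matrix

lemma det_analyticAt {n : ℕ} {σ₀ : ℂ} {M : ℂ → Matrix (Fin n) (Fin n) ℂ}
    (h : ∀ i j, AnalyticAt ℂ (fun σ => M σ i j) σ₀) :
    AnalyticAt ℂ (fun σ => (M σ).det) σ₀ := by
  simp only [Matrix.det_apply']
  exact Finset.analyticAt_fun_sum _ fun p _ =>
    (analyticAt_const.mul (Finset.analyticAt_fun_prod _ fun i _ => h (p i) i))

lemma adjugate_analyticAt {n : ℕ} {σ₀ : ℂ} {M : ℂ → Matrix (Fin n) (Fin n) ℂ}
    (h : ∀ i j, AnalyticAt ℂ (fun σ => M σ i j) σ₀) (i j : Fin n) :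
    AnalyticAt ℂ (fun σ => (M σ).adjugate i j) σ₀ := by
  simp only [Matrix.adjugate_apply]
  apply det_analyticAt
  intro a b
  by_cases hab : a = j
  · simp [hab, Matrix.updateRow_apply]
    exact analyticAt_const
  · simp [Matrix.updateRow_apply, hab]
    exact h a b

lemma clm_apply_analyticAt {K R : Type*}
    [NormedAddCommGroup K] [NormedSpace ℂ K]
    [NormedAddCommGroup R] [NormedSpace ℂ R]
    {σ₀ : ℂ} {P : ℂ → (K →L[ℂ] R)} (hP : AnalyticAt ℂ P σ₀) (x : K) :
    AnalyticAt ℂ (fun σ => P σ x) σ₀ :=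
  ((ContinuousLinearMap.apply ℂ R x).analyticAt _).comp hP

lemma coord_analyticAt {R : Type*}
    [NormedAddCommGroup R] [NormedSpace ℂ R] [FiniteDimensional ℂ R]
    {d : ℕ} (e : Module.Basis (Fin d) ℂ R) {σ₀ : ℂ} {g : ℂ → R}
    (hg : AnalyticAt ℂ g σ₀) (i : Fin d) :
    AnalyticAt ℂ (fun σ => e.repr (g σ) i) σ₀ :=
  ((LinearMap.toContinuousLinearMap (e.coord i)).analyticAt _).comp hg




/-- Structure of meromorphic solutions (Lemma mero1): for a holomorphic family
`P(σ) : K → R` near `σ₀`, invertible for `σ ≠ σ₀` with `P(σ₀) = 0`, there exist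
meromorphic germs `ψ₁,…,ψ_d` with `β_j = P·ψ_j` holomorphic and `β_j(σ₀)` a basis of
`R`; and for any such choice, every meromorphic `u` with `P·u` holomorphic can be
written `u = Σ f_j ψ_j` with holomorphic `f_j`. -/
theorem stmt_6 {K R : Type*}
    [NormedAddCommGroup K] [NormedSpace ℂ K] [FiniteDimensional ℂ K]
    [NormedAddCommGroup R] [NormedSpace ℂ R] [FiniteDimensional ℂ R]
    (d : ℕ) (hd : 0 < d)
    (hK : Module.finrank ℂ K = d) (hR : Module.finrank ℂ R = d)
    (σ₀ : ℂ) (P : ℂ → (K →L[ℂ] R)) (hP : AnalyticAt ℂ P σ₀)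
    (hinv : ∀ᶠ σ in nhdsWithin σ₀ {σ₀}ᶜ, Function.Bijective (P σ))
    (hzero : P σ₀ = 0) :
    (∃ (ψ : Fin d → ℂ → K) (β : Fin d → ℂ → R),
      (∀ j, MeromorphicAt (ψ j) σ₀) ∧
      (∀ j, AnalyticAt ℂ (β j) σ₀) ∧
      (∀ j, ∀ᶠ σ in nhdsWithin σ₀ {σ₀}ᶜ, β j σ = P σ (ψ j σ)) ∧
      LinearIndependent ℂ (fun j => β j σ₀)) ∧
    (∀ (ψ : Fin d → ℂ → K) (β : Fin d → ℂ → R),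
      (∀ j, MeromorphicAt (ψ j) σ₀) →
      (∀ j, AnalyticAt ℂ (β j) σ₀) →
      (∀ j, ∀ᶠ σ in nhdsWithin σ₀ {σ₀}ᶜ, β j σ = P σ (ψ j σ)) →
      LinearIndependent ℂ (fun j => β j σ₀) →
      ∀ u : ℂ → K, MeromorphicAt u σ₀ →
        (∃ g : ℂ → R, AnalyticAt ℂ g σ₀ ∧
          ∀ᶠ σ in nhdsWithin σ₀ {σ₀}ᶜ, g σ = P σ (u σ)) →
        ∃ f : Fin d → ℂ → ℂ, (∀ j, AnalyticAt ℂ (f j) σ₀) ∧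
          ∀ᶠ σ in nhdsWithin σ₀ {σ₀}ᶜ, u σ = ∑ j, f j σ • ψ j σ) := by
  constructor
  · -- existence
    classical
    let eK : Module.Basis (Fin d) ℂ K := Module.finBasisOfFinrankEq ℂ K hK
    let eR : Module.Basis (Fin d) ℂ R := Module.finBasisOfFinrankEq ℂ R hR
    let M : ℂ → Matrix (Fin d) (Fin d) ℂ := fun σ => LinearMap.toMatrix eK eR (P σ)
    have hM : ∀ i j, AnalyticAt ℂ (fun σ => M σ i j) σ₀ := by
      intro i j
      simp only [M, LinearMap.toMatrix_apply]
      exact coord_analyticAt eR (clm_apply_analyticAt hP (eK j)) i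
    have hA : AnalyticAt ℂ (fun σ => (M σ).det) σ₀ := det_analyticAt hM
    have hdet : ∀ σ, Function.Bijective (P σ) → (M σ).det ≠ 0 := by
      intro σ hb
      let e := LinearEquiv.ofBijective ((P σ) : K →ₗ[ℂ] R) hb
      have hcomp : (((P σ) : K →ₗ[ℂ] R).comp (e.symm : R →ₗ[ℂ] K)) = LinearMap.id := by
        ext x
        exact e.apply_symm_apply x
      have h1 : M σ * LinearMap.toMatrix eR eK (e.symm : R →ₗ[ℂ] K) = 1 := by
        calc M σ * LinearMap.toMatrix eR eK (e.symm : R →ₗ[ℂ] K)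
            = LinearMap.toMatrix eR eR ((((P σ) : K →ₗ[ℂ] R)).comp (e.symm : R →ₗ[ℂ] K)) :=
              (LinearMap.toMatrix_comp eR eK eR _ _).symm
          _ = 1 := by rw [hcomp, LinearMap.toMatrix_id]
      have h2 := congrArg Matrix.det h1
      rw [Matrix.det_mul, Matrix.det_one] at h2
      exact left_ne_zero_of_mul_eq_one h2
    let ψ : Fin d → ℂ → K := fun j σ => ((M σ).det)⁻¹ • ∑ i, (M σ).adjugate i j • eK i
    let β : Fin d → ℂ → R := fun j _ => eR j
    refine ⟨ψ, β, ?_, fun j => analyticAt_const, ?_, eR.linearIndependent⟩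
    · intro j
      have hv : AnalyticAt ℂ (fun σ => ∑ i, (M σ).adjugate i j • eK i) σ₀ :=
        Finset.analyticAt_fun_sum _ fun i _ => (adjugate_analyticAt hM i j).smul analyticAt_const
      exact (hA.meromorphicAt.inv).smul hv.meromorphicAt
    · intro j
      filter_upwards [hinv] with σ hσ
      have hd0 : (M σ).det ≠ 0 := hdet σ hσ
      have hψ : ψ j σ = eK.equivFun.symm (fun i => ((M σ).det)⁻¹ * (M σ).adjugate i j) := by
        show ((M σ).det)⁻¹ • ∑ i, (M σ).adjugate i j • eK i = _
        rw [Module.Basis.equivFun_symm_apply, Finset.smul_sum]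
        exact Finset.sum_congr rfl fun i _ => by rw [smul_smul]
      have h3 : ⇑(eK.repr (ψ j σ)) = fun i => ((M σ).det)⁻¹ * (M σ).adjugate i j := by
        rw [hψ]
        funext i
        rw [← Module.Basis.equivFun_apply, LinearEquiv.apply_symm_apply]
      have hrepr : ⇑(eR.repr (P σ (ψ j σ))) = fun i => (1 : Matrix (Fin d) (Fin d) ℂ) i j := by
        funext i
        have h2 := LinearMap.toMatrix_mulVec_repr eK eR ((P σ) : K →ₗ[ℂ] R) (ψ j σ)
        have h2' : (eR.repr ((P σ) (ψ j σ))) i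
            = (M σ *ᵥ ⇑(eK.repr (ψ j σ))) i := (congrFun h2 i).symm
        rw [h2', h3]
        show ∑ k, M σ i k * (((M σ).det)⁻¹ * (M σ).adjugate k j) = _
        calc ∑ k, M σ i k * (((M σ).det)⁻¹ * (M σ).adjugate k j)
            = ((M σ).det)⁻¹ * ∑ k, M σ i k * (M σ).adjugate k j := by
              rw [Finset.mul_sum]; exact Finset.sum_congr rfl fun k _ => by ring
          _ = ((M σ).det)⁻¹ * ((M σ) * (M σ).adjugate) i j := by rw [Matrix.mul_apply]
          _ = ((M σ).det)⁻¹ * ((M σ).det * (1 : Matrix (Fin d) (Fin d) ℂ) i j) := by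
              rw [Matrix.mul_adjugate]; simp
          _ = (1 : Matrix (Fin d) (Fin d) ℂ) i j := by
              rw [← mul_assoc, inv_mul_cancel₀ hd0, one_mul]
      show eR j = P σ (ψ j σ)
      refine (eR.repr.injective ?_).symm
      ext i
      have hc := congrFun hrepr i
      simpa [Matrix.one_apply, Finsupp.single_apply, eq_comm] using hc
  · -- structure of solutions
    intro ψ βv hψ hβ hβP hli u hu hgex
    classical
    obtain ⟨g, hg, hgu⟩ := hgex
    haveI : Nonempty (Fin d) := Fin.pos_iff_nonempty.mp hd
    let eR : Module.Basis (Fin d) ℂ R := Module.finBasisOfFinrankEq ℂ R hR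
    let N : ℂ → Matrix (Fin d) (Fin d) ℂ := fun σ => Matrix.of fun i j => eR.repr (βv j σ) i
    have hN : ∀ i j, AnalyticAt ℂ (fun σ => N σ i j) σ₀ := fun i j =>
      coord_analyticAt eR (hβ j) i
    have hD : AnalyticAt ℂ (fun σ => (N σ).det) σ₀ := det_analyticAt hN
    -- det at σ₀ is nonzero
    have hcard : Fintype.card (Fin d) = Module.finrank ℂ R := by simp [hR]
    let b : Module.Basis (Fin d) ℂ R := basisOfLinearIndependentOfCardEqFinrank hli hcard
    have hb : ∀ j, b j = βv j σ₀ := fun j =>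
      coe_basisOfLinearIndependentOfCardEqFinrank hli hcard ▸ rfl
    have hN0 : N σ₀ = eR.toMatrix b := by
      ext i j
      simp only [N, Matrix.of_apply, Module.Basis.toMatrix_apply, hb]
    have hD0 : (N σ₀).det ≠ 0 := by
      rw [hN0]
      have : Invertible (eR.toMatrix b) := eR.invertibleToMatrix b
      exact (Matrix.isUnit_iff_isUnit_det _).mp (isUnit_of_invertible _) |>.ne_zero
    -- the coefficient functions
    let f : Fin d → ℂ → ℂ := fun j σ =>
      ((N σ).det)⁻¹ * ∑ i, (N σ).adjugate j i * eR.repr (g σ) i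
    have hf : ∀ j, AnalyticAt ℂ (f j) σ₀ := fun j =>
      (hD.inv hD0).mul (Finset.analyticAt_fun_sum _ fun i _ =>
        (adjugate_analyticAt hN j i).mul (coord_analyticAt eR hg i))
    refine ⟨f, hf, ?_⟩
    have hDev : ∀ᶠ σ in nhdsWithin σ₀ {σ₀}ᶜ, (N σ).det ≠ 0 :=
      nhdsWithin_le_nhds (hD.continuousAt.eventually_ne hD0)
    have hβPall : ∀ᶠ σ in nhdsWithin σ₀ {σ₀}ᶜ, ∀ j, βv j σ = P σ (ψ j σ) :=
      Filter.eventually_all.mpr hβP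
    filter_upwards [hinv, hβPall, hgu, hDev] with σ hbij hβσ hgσ hd0
    -- show u σ = ∑ j, f j σ • ψ j σ
    have key : ∑ j, f j σ • βv j σ = g σ := by
      apply eR.repr.injective
      ext i
      rw [map_sum]
      have : ∀ j, eR.repr (f j σ • βv j σ) i = N σ i j * f j σ := by
        intro j
        rw [_root_.map_smul]
        show f j σ * eR.repr (βv j σ) i = _
        exact mul_comm _ _
      rw [Finsupp.finset_sum_apply]
      calc ∑ j, eR.repr (f j σ • βv j σ) i = ∑ j, N σ i j * f j σ :=
            Finset.sum_congr rfl fun j _ => this j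
        _ = (N σ *ᵥ fun j => f j σ) i := rfl
        _ = eR.repr (g σ) i := by
            have hw : (fun j => f j σ)
                = ((N σ).det)⁻¹ • ((N σ).adjugate *ᵥ fun i => eR.repr (g σ) i) := by
              funext j
              simp only [f, Pi.smul_apply, smul_eq_mul]
              rfl
            rw [hw, Matrix.mulVec_smul, Matrix.mulVec_mulVec, Matrix.mul_adjugate,
              Matrix.smul_mulVec, Matrix.one_mulVec, smul_smul,
              inv_mul_cancel₀ hd0, one_smul]
    have : P σ (∑ j, f j σ • ψ j σ) = P σ (u σ) := by
      rw [map_sum, ← hgσ, ← key]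
      exact Finset.sum_congr rfl fun j _ => by rw [_root_.map_smul, ← hβσ j]
    exact (hbij.injective this).symm
end

section
/- Let P(σ) : K → R be holomorphic near σ₀, invertible for σ ≠ σ₀, P(σ₀) = 0, and let ψ₁,…,ψ_d be chosen as in the structure theorem (each P·ψ_j holomorphic with values at σ₀ forming a basis of R, and the leading Laurent coefficients of the ψ_j linearly independent), with pole orders μ_j. Then the images of the elements (σ−σ₀)^ℓ ψ_j, for j = 1,…,d and ℓ = 0,…,μ_j−1, form a basis of the complex vector space Ê_{σ₀} = P^{-1}(Hol_{σ₀}(R)) / Hol_{σ₀}(K). In particular dim_ℂ Ê_{σ₀} = Σ_{j=1}^d μ_j. -/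
open Filter Finset

private lemma aux_clm_apply {E F : Type*} [NormedAddCommGroup E] [NormedSpace ℂ E]
    [NormedAddCommGroup F] [NormedSpace ℂ F]
    {f : ℂ → (E →L[ℂ] F)} {g : ℂ → E} {x : ℂ}
    (hf : AnalyticAt ℂ f x) (hg : AnalyticAt ℂ g x) :
    AnalyticAt ℂ (fun σ => f σ (g σ)) x := by
  have h := (ContinuousLinearMap.id ℂ (E →L[ℂ] F)).analyticAt_bilinear (f x, g x)
  have := AnalyticAt.comp (g := fun p : (E →L[ℂ] F) × E => p.1 p.2)
    (f := fun σ => (f σ, g σ)) h (hf.prod hg)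
  exact this

private lemma aux_taylor {f : ℂ → ℂ} {σ₀ : ℂ} (hf : AnalyticAt ℂ f σ₀) (n : ℕ) :
    ∃ (a : ℕ → ℂ) (r : ℂ → ℂ), AnalyticAt ℂ r σ₀ ∧
      ∀ σ, f σ = (∑ ℓ ∈ Finset.range n, a ℓ * (σ - σ₀) ^ ℓ) + (σ - σ₀) ^ n * r σ := by
  induction n with
  | zero => exact ⟨fun _ => 0, f, hf, fun σ => by simp⟩
  | succ n ih =>
    obtain ⟨a, r, hr, heq⟩ := ih
    have hr' : AnalyticAt ℂ (dslope r σ₀) σ₀ := by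
      obtain ⟨p, hp⟩ := hr
      exact ⟨p.fslope, hp.has_fpower_series_dslope_fslope⟩
    refine ⟨Function.update a n (r σ₀), dslope r σ₀, hr', fun σ => ?_⟩
    have key : r σ = r σ₀ + (σ - σ₀) * dslope r σ₀ σ := by
      have h2 := sub_smul_dslope r σ₀ σ
      simp only [smul_eq_mul] at h2
      linear_combination -h2
    rw [Finset.sum_range_succ, heq σ, key, Function.update_self]
    rw [Finset.sum_congr rfl (fun ℓ hℓ => by
      rw [Function.update_of_ne (Finset.mem_range.1 hℓ).ne] :
      ∀ ℓ ∈ Finset.range n, Function.update a n (r σ₀) ℓ * (σ - σ₀) ^ ℓ = a ℓ * (σ - σ₀) ^ ℓ)]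
    ring

private lemma aux_pow_smul {K : Type*} [AddCommGroup K] [Module ℂ K]
    {x : ℂ} (hx : x ≠ 0) (p m μ : ℕ) (hμ : μ ≤ p) (v : K) :
    x ^ p • (x ^ ((m : ℤ) - (μ : ℤ)) • v) = x ^ (p + m - μ) • v := by
  rw [smul_smul, ← zpow_natCast x p, ← zpow_add₀ hx, ← zpow_natCast x (p + m - μ)]
  rw [Nat.cast_sub (by omega : μ ≤ p + m), Nat.cast_add]
  ring

/-- Basis of `Ê_{σ₀} = P^{-1}(Hol_{σ₀}(R))/Hol_{σ₀}(K)` (Lemma mero8): given a system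
`ψ₁,…,ψ_d` as in the structure theorem (with `P·ψ_j = β_j` holomorphic, `β_j(σ₀)` a
basis of `R`, Laurent expansions with pole orders `μ_j` and independent leading
coefficients), the elements `(σ−σ₀)^ℓ ψ_j`, `ℓ = 0,…,μ_j−1`, span `P^{-1}(Hol)` modulo
holomorphic germs, and are linearly independent modulo holomorphic germs; hence
`dim Ê_{σ₀} = Σ μ_j`. -/
theorem stmt_8 {K R : Type*}
    [NormedAddCommGroup K] [NormedSpace ℂ K] [FiniteDimensional ℂ K]
    [NormedAddCommGroup R] [NormedSpace ℂ R] [FiniteDimensional ℂ R]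
    (d : ℕ) (hd : 0 < d)
    (hK : Module.finrank ℂ K = d) (hR : Module.finrank ℂ R = d)
    (σ₀ : ℂ) (P : ℂ → (K →L[ℂ] R)) (hP : AnalyticAt ℂ P σ₀)
    (hinv : ∀ᶠ σ in nhdsWithin σ₀ {σ₀}ᶜ, Function.Bijective (P σ))
    (hzero : P σ₀ = 0)
    (ψ : Fin d → ℂ → K) (β : Fin d → ℂ → R) (μ : Fin d → ℕ)
    (c : Fin d → ℕ → K) (h : Fin d → ℂ → K)
    (hμ : ∀ j, 0 < μ j)
    (hβa : ∀ j, AnalyticAt ℂ (β j) σ₀)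
    (hβψ : ∀ j, ∀ᶠ σ in nhdsWithin σ₀ {σ₀}ᶜ, β j σ = P σ (ψ j σ))
    (hβind : LinearIndependent ℂ (fun j => β j σ₀))
    (hha : ∀ j, AnalyticAt ℂ (h j) σ₀)
    (hlaurent : ∀ j, ∀ᶠ σ in nhdsWithin σ₀ {σ₀}ᶜ,
      ψ j σ = (∑ ℓ ∈ Finset.range (μ j),
        ((σ - σ₀) ^ ((ℓ : ℤ) - (μ j : ℤ))) • c j ℓ) + h j σ)
    (hcind : LinearIndependent ℂ (fun j => c j 0)) :
    (∀ u : ℂ → K, MeromorphicAt u σ₀ →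
      (∃ g : ℂ → R, AnalyticAt ℂ g σ₀ ∧
        ∀ᶠ σ in nhdsWithin σ₀ {σ₀}ᶜ, g σ = P σ (u σ)) →
      ∃ (a : Fin d → ℕ → ℂ) (w : ℂ → K), AnalyticAt ℂ w σ₀ ∧
        ∀ᶠ σ in nhdsWithin σ₀ {σ₀}ᶜ,
          u σ = (∑ j, ∑ ℓ ∈ Finset.range (μ j), (a j ℓ * (σ - σ₀) ^ ℓ) • ψ j σ) + w σ) ∧
    (∀ a : Fin d → ℕ → ℂ,
      (∃ w : ℂ → K, AnalyticAt ℂ w σ₀ ∧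
        ∀ᶠ σ in nhdsWithin σ₀ {σ₀}ᶜ,
          (∑ j, ∑ ℓ ∈ Finset.range (μ j), (a j ℓ * (σ - σ₀) ^ ℓ) • ψ j σ) = w σ) →
      ∀ j, ∀ ℓ ∈ Finset.range (μ j), a j ℓ = 0) := by
  classical
  have hne : ∀ᶠ σ in nhdsWithin σ₀ {σ₀}ᶜ, σ ≠ σ₀ :=
    eventually_mem_nhdsWithin.mono (fun σ hσ => hσ)
  haveI : Nonempty (Fin d) := ⟨⟨0, hd⟩⟩
  -- the analytic functions Φ j with (σ-σ₀)^{μ j} • ψ j σ = Φ j σ off σ₀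
  set Φ : Fin d → ℂ → K := fun j σ =>
    (∑ m ∈ Finset.range (μ j), (σ - σ₀) ^ m • c j m) + (σ - σ₀) ^ (μ j) • h j σ with hΦdef
  have hΦan : ∀ j, AnalyticAt ℂ (Φ j) σ₀ := by
    intro j
    apply AnalyticAt.add
    · exact Finset.analyticAt_fun_sum _ (fun m _ =>
        ((analyticAt_id.sub analyticAt_const).pow m).smul analyticAt_const)
    · exact ((analyticAt_id.sub analyticAt_const).pow (μ j)).smul (hha j)
  have hΦψ : ∀ j, ∀ᶠ σ in nhdsWithin σ₀ {σ₀}ᶜ, (σ - σ₀) ^ (μ j) • ψ j σ = Φ j σ := by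
    intro j
    filter_upwards [hlaurent j, hne] with σ hψσ hσ
    have hs0 : σ - σ₀ ≠ 0 := sub_ne_zero.2 hσ
    rw [hψσ, smul_add, Finset.smul_sum, hΦdef]
    congr 1
    refine Finset.sum_congr rfl (fun m hm => ?_)
    rw [aux_pow_smul hs0 (μ j) m (μ j) le_rfl]
    congr 2
    omega
  constructor
  · rintro u hu ⟨g, hg, hgu⟩
    have hcard : Fintype.card (Fin d) = Module.finrank ℂ R := by simp [hR]
    set bR : Module.Basis (Fin d) ℂ R := basisOfLinearIndependentOfCardEqFinrank hβind hcard with hbRdef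
    have hbR : ∀ j, bR j = β j σ₀ := fun j => by
      rw [hbRdef, coe_basisOfLinearIndependentOfCardEqFinrank]
    set A : ℂ → ((Fin d → ℂ) →L[ℂ] R) := fun σ =>
      ∑ j, (ContinuousLinearMap.proj j).smulRight (β j σ) with hAdef
    have hAapp : ∀ σ v, A σ v = ∑ j, v j • β j σ := by
      intro σ v
      simp [hAdef, ContinuousLinearMap.sum_apply]
    have hAan : AnalyticAt ℂ A σ₀ := by
      apply Finset.analyticAt_fun_sum
      intro j _
      have : AnalyticAt ℂ
          (fun σ => ContinuousLinearMap.smulRightL ℂ (Fin d → ℂ) R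
            (ContinuousLinearMap.proj j) (β j σ)) σ₀ :=
        ((ContinuousLinearMap.smulRightL ℂ (Fin d → ℂ) R
          (ContinuousLinearMap.proj j)).analyticAt _).comp (hβa j)
      simpa [ContinuousLinearMap.smulRightL] using this
    set E0 : (Fin d → ℂ) ≃L[ℂ] R := bR.equivFun.symm.toContinuousLinearEquiv with hE0def
    have hE0app : ∀ v, E0 v = ∑ j, v j • β j σ₀ := by
      intro v
      rw [hE0def]
      show (bR.equivFun.symm.toContinuousLinearEquiv : (Fin d → ℂ) → R) v = _
      rw [LinearEquiv.coe_toContinuousLinearEquiv', Module.Basis.equivFun_symm_apply]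
      exact Finset.sum_congr rfl (fun j _ => by rw [hbR])
    have hAσ₀ : A σ₀ = (E0 : (Fin d → ℂ) →L[ℂ] R) := by
      ext v
      rw [hAapp, ContinuousLinearEquiv.coe_coe, hE0app]
    set B : ℂ → ((Fin d → ℂ) →L[ℂ] (Fin d → ℂ)) := fun σ =>
      (E0.symm : R →L[ℂ] (Fin d → ℂ)).comp (A σ) with hBdef
    have hBan : AnalyticAt ℂ B σ₀ :=
      ((ContinuousLinearMap.compL ℂ (Fin d → ℂ) R (Fin d → ℂ)
        (E0.symm : R →L[ℂ] (Fin d → ℂ))).analyticAt _).comp hAan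
    have hB0 : B σ₀ = 1 := by
      ext v
      simp [hBdef, hAσ₀, ContinuousLinearMap.one_apply]
    have hBunit : ∀ᶠ σ in nhds σ₀, IsUnit (B σ) := by
      have hmem : {T : (Fin d → ℂ) →L[ℂ] (Fin d → ℂ) | IsUnit T} ∈ nhds (B σ₀) :=
        Units.isOpen.mem_nhds (by rw [hB0]; exact isUnit_one)
      exact hBan.continuousAt.preimage_mem_nhds hmem
    set γv : ℂ → (Fin d → ℂ) := fun σ => Ring.inverse (B σ) (E0.symm (g σ)) with hγdef
    have hγan : AnalyticAt ℂ γv σ₀ := by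
      apply aux_clm_apply
      · have h1 : AnalyticAt ℂ (Ring.inverse :
            ((Fin d → ℂ) →L[ℂ] (Fin d → ℂ)) → ((Fin d → ℂ) →L[ℂ] (Fin d → ℂ))) (B σ₀) := by
          rw [hB0]
          simpa using analyticAt_inverse (𝕜 := ℂ)
            (1 : ((Fin d → ℂ) →L[ℂ] (Fin d → ℂ))ˣ)
        exact h1.comp hBan
      · exact ((E0.symm : R →L[ℂ] (Fin d → ℂ)).analyticAt _).comp hg
    have hAg : ∀ᶠ σ in nhds σ₀, ∑ j, γv σ j • β j σ = g σ := by
      filter_upwards [hBunit] with σ hσ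
      have h1 : ∑ j, γv σ j • β j σ = A σ (γv σ) := (hAapp σ _).symm
      rw [h1]
      have h2 : A σ (γv σ) = E0 (B σ (γv σ)) := by
        rw [hBdef]
        simp
      rw [h2]
      have h3 : B σ (γv σ) = (B σ * Ring.inverse (B σ)) (E0.symm (g σ)) := rfl
      rw [h3, Ring.mul_inverse_cancel _ hσ]
      simp
    have huψ : ∀ᶠ σ in nhdsWithin σ₀ {σ₀}ᶜ, u σ = ∑ j, γv σ j • ψ j σ := by
      filter_upwards [hgu, hinv, eventually_all.2 hβψ,
        hAg.filter_mono nhdsWithin_le_nhds] with σ h1 h2 h3 h4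
      apply h2.1
      rw [← h1, ← h4, map_sum]
      exact Finset.sum_congr rfl (fun j _ => by rw [h3 j, map_smul])
    have htay : ∀ j, ∃ (aa : ℕ → ℂ) (rr : ℂ → ℂ), AnalyticAt ℂ rr σ₀ ∧
        ∀ σ, γv σ j = (∑ ℓ ∈ Finset.range (μ j), aa ℓ * (σ - σ₀) ^ ℓ) +
          (σ - σ₀) ^ (μ j) * rr σ := by
      intro j
      have : AnalyticAt ℂ (fun σ => γv σ j) σ₀ :=
        ((ContinuousLinearMap.proj j : (Fin d → ℂ) →L[ℂ] ℂ).analyticAt _).comp hγan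
      exact aux_taylor this (μ j)
    choose a r hran htayeq using htay
    refine ⟨a, fun σ => ∑ j, r j σ • Φ j σ,
      Finset.analyticAt_fun_sum _ (fun j _ => (hran j).smul (hΦan j)), ?_⟩
    filter_upwards [huψ, eventually_all.2 hΦψ] with σ h1 h2
    rw [h1, ← Finset.sum_add_distrib]
    refine Finset.sum_congr rfl (fun j _ => ?_)
    rw [htayeq j σ, add_smul, Finset.sum_smul]
    congr 1
    rw [← h2 j, mul_comm, mul_smul]
  · rintro a ⟨w, hw, hweq⟩
    set N := Finset.univ.sup μ with hNdef
    have hμN : ∀ j, μ j ≤ N := fun j => Finset.le_sup (Finset.mem_univ j)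
    have main : ∀ m : ℕ, ∀ j ℓ, ℓ < μ j → N < (μ j - ℓ) + m → a j ℓ = 0 := by
      intro m
      induction m with
      | zero =>
        intro j ℓ h1 h2
        exact absurd h2 (by have := hμN j; omega)
      | succ m ih =>
        intro j ℓ hℓ hcond
        by_cases hprev : N < (μ j - ℓ) + m
        · exact ih j ℓ hℓ hprev
        set n := μ j - ℓ with hndef
        have hn1 : 1 ≤ n := by omega
        have hIH : ∀ j' ℓ', ℓ' < μ j' → n < μ j' - ℓ' → a j' ℓ' = 0 := by
          intro j' ℓ' h1 h2
          exact ih j' ℓ' h1 (by omega)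
        set F : Fin d → Finset ℕ :=
          fun j' => (Finset.range (μ j')).filter (fun ℓ' => μ j' ≤ ℓ' + n) with hFdef
        set G : ℂ → K := fun σ => ∑ j', ∑ ℓ' ∈ F j', a j' ℓ' •
          ((∑ m' ∈ Finset.range (μ j'), (σ - σ₀) ^ (ℓ' + n + m' - μ j') • c j' m')
            + (σ - σ₀) ^ (ℓ' + n) • h j' σ) with hGdef
        have hGan : AnalyticAt ℂ G σ₀ := by
          apply Finset.analyticAt_fun_sum
          intro j' _
          apply Finset.analyticAt_fun_sum
          intro ℓ' _
          apply analyticAt_const.smul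
          apply AnalyticAt.add
          · exact Finset.analyticAt_fun_sum _ (fun m' _ =>
              ((analyticAt_id.sub analyticAt_const).pow _).smul analyticAt_const)
          · exact ((analyticAt_id.sub analyticAt_const).pow _).smul (hha j')
        have hGeq : ∀ᶠ σ in nhdsWithin σ₀ {σ₀}ᶜ, (σ - σ₀) ^ n • w σ = G σ := by
          filter_upwards [hweq, eventually_all.2 hlaurent, hne] with σ h1 h2 hσ
          have hs0 : σ - σ₀ ≠ 0 := sub_ne_zero.2 hσ
          rw [← h1, Finset.smul_sum, hGdef]
          refine Finset.sum_congr rfl (fun j' _ => ?_)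
          rw [Finset.smul_sum]
          rw [← Finset.sum_filter_add_sum_filter_not (Finset.range (μ j'))
            (fun ℓ' => μ j' ≤ ℓ' + n)
            (fun ℓ' => (σ - σ₀) ^ n • ((a j' ℓ' * (σ - σ₀) ^ ℓ') • ψ j' σ))]
          have hz : ∑ ℓ' ∈ (Finset.range (μ j')).filter (fun ℓ' => ¬ μ j' ≤ ℓ' + n),
              (σ - σ₀) ^ n • ((a j' ℓ' * (σ - σ₀) ^ ℓ') • ψ j' σ) = 0 := by
            refine Finset.sum_eq_zero (fun ℓ' hℓ' => ?_)
            obtain ⟨hmem, hnot⟩ := Finset.mem_filter.1 hℓ'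
            rw [hIH j' ℓ' (Finset.mem_range.1 hmem) (by omega), zero_mul, zero_smul,
              smul_zero]
          rw [hz, add_zero]
          refine Finset.sum_congr rfl (fun ℓ' hℓ' => ?_)
          obtain ⟨hmem, hle⟩ := Finset.mem_filter.1 hℓ'
          have hmem' : ℓ' < μ j' := Finset.mem_range.1 hmem
          have hψeq : (σ - σ₀) ^ (ℓ' + n) • ψ j' σ =
              (∑ m' ∈ Finset.range (μ j'), (σ - σ₀) ^ (ℓ' + n + m' - μ j') • c j' m')
                + (σ - σ₀) ^ (ℓ' + n) • h j' σ := by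
            rw [h2 j', smul_add, Finset.smul_sum]
            congr 1
            exact Finset.sum_congr rfl (fun m' _ =>
              aux_pow_smul hs0 (ℓ' + n) m' (μ j') hle (c j' m'))
          rw [← hψeq, smul_smul, smul_smul]
          congr 1
          ring
        have hG0 : G σ₀ = ∑ j', (if n ≤ μ j' then a j' (μ j' - n) else 0) • c j' 0 := by
          rw [hGdef]
          refine Finset.sum_congr rfl (fun j' _ => ?_)
          have hbz : ∀ ℓ' ∈ F j', μ j' < ℓ' + n →
              ((∑ m' ∈ Finset.range (μ j'), (σ₀ - σ₀) ^ (ℓ' + n + m' - μ j') • c j' m')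
                + (σ₀ - σ₀) ^ (ℓ' + n) • h j' σ₀) = 0 := by
            intro ℓ' hℓ' hgt
            rw [sub_self]
            rw [Finset.sum_eq_zero (fun m' _ => by
              rw [zero_pow (by omega), zero_smul]), zero_add,
              zero_pow (by omega), zero_smul]
          by_cases hcase : n ≤ μ j'
          · rw [if_pos hcase]
            rw [Finset.sum_eq_single (μ j' - n)]
            · have heq1 : μ j' - n + n = μ j' := by omega
              rw [sub_self]
              congr 1
              rw [Finset.sum_eq_single 0]
              · rw [heq1]
                have e0 : μ j' + 0 - μ j' = 0 := by omega
                rw [e0, pow_zero, one_smul, zero_pow (by omega), zero_smul, add_zero]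
              · intro m' _ hm0
                rw [zero_pow (by omega), zero_smul]
              · intro habs
                exact absurd (Finset.mem_range.2 (hμ j')) habs
            · intro ℓ' hℓ' hne'
              obtain ⟨hmem, hle⟩ := Finset.mem_filter.1 hℓ'
              rw [hbz ℓ' hℓ' (by
                have := Finset.mem_range.1 hmem
                omega), smul_zero]
            · intro habs
              exfalso
              apply habs
              rw [hFdef]
              simp only [Finset.mem_filter, Finset.mem_range]
              omega
          · rw [if_neg hcase, zero_smul]
            refine Finset.sum_eq_zero (fun ℓ' hℓ' => ?_)
            rw [hbz ℓ' hℓ' (by omega), smul_zero]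
        have hlim1 : Filter.Tendsto (fun σ => (σ - σ₀) ^ n • w σ)
            (nhdsWithin σ₀ {σ₀}ᶜ) (nhds 0) := by
          have hc : ContinuousAt (fun σ => (σ - σ₀) ^ n • w σ) σ₀ :=
            (((continuous_id.sub continuous_const).pow n).continuousAt).smul
              hw.continuousAt
          have h0 : (σ₀ - σ₀) ^ n • w σ₀ = 0 := by
            rw [sub_self, zero_pow (by omega), zero_smul]
          have := hc.continuousWithinAt (s := {σ₀}ᶜ)
          rw [ContinuousWithinAt] at this
          rwa [h0] at this
        have hlim2 : Filter.Tendsto G (nhdsWithin σ₀ {σ₀}ᶜ) (nhds (G σ₀)) :=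
          hGan.continuousAt.continuousWithinAt
        have hG00 : G σ₀ = 0 :=
          tendsto_nhds_unique (hlim2) (hlim1.congr' (hGeq.mono (fun σ hσ => hσ)))
        have hcoef := Fintype.linearIndependent_iff.1 hcind
          (fun j' => if n ≤ μ j' then a j' (μ j' - n) else 0)
          (by rw [← hG0, hG00]) j
        rw [if_pos (by omega : n ≤ μ j)] at hcoef
        have : μ j - n = ℓ := by omega
        rwa [this] at hcoef
    intro j ℓ hℓ
    exact main (N + 1) j ℓ (Finset.mem_range.1 hℓ) (by
      have h1 : 1 ≤ μ j - ℓ := by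
        have := Finset.mem_range.1 hℓ
        omega
      omega)
end

section
/- Let K, R be finite dimensional hermitian spaces, P(σ) : K → R holomorphic near σ₀, invertible for σ ≠ σ₀, P(σ₀) = 0, and let P⋆(σ) = P(σ̄)* (pointwise adjoint), which is holomorphic near σ̄₀. For u ∈ P^{-1}(Hol_{σ₀}(K)) and v ∈ (P⋆)^{-1}(Hol_{σ̄₀}(R)), define [u,v]_{P,σ₀} = (1/2π) ∮_{|σ−σ₀|=ε} ⟨P(σ)u(σ), v(σ̄)⟩ dσ. Then [u,v]_{P,σ₀} vanishes when u or v is holomorphic, and the induced pairing Ê_{σ₀} × Ê⋆_{σ̄₀} → ℂ on the quotients by holomorphic germs is a nonsingular (nondegenerate) pairing of finite dimensional vector spaces. -/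
open Filter Topology Metric Set Complex

/-- conj maps punctured neighborhoods to punctured neighborhoods. -/
lemma tendsto_conj_punctured (a : ℂ) :
    Tendsto (starRingEnd ℂ) (𝓝[≠] a) (𝓝[≠] ((starRingEnd ℂ) a)) := by
  rw [tendsto_nhdsWithin_iff]
  constructor
  · exact (Complex.continuous_conj.tendsto a).mono_left nhdsWithin_le_nhds
  · filter_upwards [eventually_mem_nhdsWithin] with z hz
    simp only [Set.mem_compl_iff, Set.mem_singleton_iff] at hz ⊢
    exact fun h => hz (by simpa using congrArg (starRingEnd ℂ) h)

/-- Transfer of analyticity along a conjugate-linear continuous map and conjugation. -/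
lemma analyticAt_conj_comp {A A' : Type*} [NormedAddCommGroup A] [NormedSpace ℂ A] [CompleteSpace A]
    [NormedAddCommGroup A'] [NormedSpace ℂ A'] [CompleteSpace A']
    {g : ℂ → A} {b : ℂ} (hg : AnalyticAt ℂ g b)
    (J : A → A') (hJa : ∀ x y, J (x + y) = J x + J y)
    (hJs : ∀ (c : ℂ) (x : A), J (c • x) = (starRingEnd ℂ) c • J x)
    (hJc : Continuous J) :
    AnalyticAt ℂ (fun σ => J (g ((starRingEnd ℂ) σ))) ((starRingEnd ℂ) b) := by
  have hJ0 : J 0 = 0 := by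
    have := hJs 0 0; simpa using this
  have hJsub : ∀ x y, J (x - y) = J x - J y := by
    intro x y
    have h1 : J (-y) = - J y := by
      have := hJs (-1) y; simpa using this
    rw [sub_eq_add_neg, hJa, h1, sub_eq_add_neg]
  rw [Complex.analyticAt_iff_eventually_differentiableAt]
  have hg' : ∀ᶠ w in 𝓝 b, DifferentiableAt ℂ g w :=
    Complex.analyticAt_iff_eventually_differentiableAt.mp hg
  have hmap : Tendsto (starRingEnd ℂ) (𝓝 ((starRingEnd ℂ) b)) (𝓝 b) := by
    simpa using (Complex.continuous_conj.tendsto ((starRingEnd ℂ) b))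
  filter_upwards [hmap.eventually hg'] with z hz
  -- hz : DifferentiableAt ℂ g (conj z)
  have key : HasDerivAt (fun σ => J (g ((starRingEnd ℂ) σ)))
      (J (deriv g ((starRingEnd ℂ) z))) z := by
    rw [hasDerivAt_iff_tendsto_slope]
    have hslope : Tendsto (slope g ((starRingEnd ℂ) z)) (𝓝[≠] ((starRingEnd ℂ) z))
        (𝓝 (deriv g ((starRingEnd ℂ) z))) :=
      hasDerivAt_iff_tendsto_slope.mp hz.hasDerivAt
    have hcomp : Tendsto (fun w => J (slope g ((starRingEnd ℂ) z) ((starRingEnd ℂ) w)))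
        (𝓝[≠] z) (𝓝 (J (deriv g ((starRingEnd ℂ) z)))) :=
      (hJc.tendsto _).comp (hslope.comp (tendsto_conj_punctured z))
    refine hcomp.congr' ?_
    filter_upwards [eventually_mem_nhdsWithin] with w hw
    have hwz : w ≠ z := by simpa using hw
    have hne : ((starRingEnd ℂ) w - (starRingEnd ℂ) z) ≠ 0 := by
      simp only [sub_ne_zero]
      exact fun h => hwz (by simpa using congrArg (starRingEnd ℂ) h)
    simp only [slope, vsub_eq_sub]
    rw [hJs, hJsub]
    congr 1
    simp
  exact key.differentiableAt

/-- Transfer of meromorphy along a conjugate-linear continuous map and conjugation. -/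
lemma meromorphicAt_conj_comp {A A' : Type*} [NormedAddCommGroup A] [NormedSpace ℂ A]
    [CompleteSpace A] [NormedAddCommGroup A'] [NormedSpace ℂ A'] [CompleteSpace A']
    {f : ℂ → A} {b : ℂ} (hf : MeromorphicAt f b)
    (J : A → A') (hJa : ∀ x y, J (x + y) = J x + J y)
    (hJs : ∀ (c : ℂ) (x : A), J (c • x) = (starRingEnd ℂ) c • J x)
    (hJc : Continuous J) :
    MeromorphicAt (fun σ => J (f ((starRingEnd ℂ) σ))) ((starRingEnd ℂ) b) := by
  obtain ⟨m, hA⟩ := hf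
  refine ⟨m, ?_⟩
  have h2 := analyticAt_conj_comp hA J hJa hJs hJc
  refine h2.congr ?_
  filter_upwards with z
  rw [hJs]
  congr 1
  simp

lemma MeromorphicAt.clmComp {E F : Type*} [NormedAddCommGroup E] [NormedSpace ℂ E]
    [NormedAddCommGroup F] [NormedSpace ℂ F]
    {N : ℂ → E} {a : ℂ} (h : MeromorphicAt N a) (L : E →L[ℂ] F) :
    MeromorphicAt (fun z => L (N z)) a := by
  obtain ⟨m, hA⟩ := h
  refine ⟨m, ?_⟩
  have := ((L.analyticAt _).comp hA)
  refine this.congr ?_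
  filter_upwards with z
  simp [Function.comp, map_smul]

lemma AnalyticAt.clmApply {E F : Type*} [NormedAddCommGroup E] [NormedSpace ℂ E]
    [NormedAddCommGroup F] [NormedSpace ℂ F]
    {f : ℂ → (E →L[ℂ] F)} {g : ℂ → E} {a : ℂ}
    (hf : AnalyticAt ℂ f a) (hg : AnalyticAt ℂ g a) :
    AnalyticAt ℂ (fun z => f z (g z)) a := by
  have hB := (ContinuousLinearMap.apply ℂ F).analyticAt_bilinear (g a, f a)
  exact AnalyticAt.comp (f := fun z => (g z, f z))
    (g := fun p : E × (E →L[ℂ] F) => (ContinuousLinearMap.apply ℂ F) p.1 p.2) hB (hg.prod hf)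

lemma eventually_punctured_ball {a : ℂ} {p : ℂ → Prop} (h : ∀ᶠ z in 𝓝[≠] a, p z) :
    ∃ r > 0, ∀ z, z ≠ a → dist z a < r → p z := by
  rw [eventually_nhdsWithin_iff, Metric.eventually_nhds_iff] at h
  obtain ⟨r, hr, H⟩ := h
  exact ⟨r, hr, fun z hz hd => H (by simpa [dist_eq] using hd) (by simpa using hz)⟩

/-- If an analytic function has vanishing `(z-a)⁻¹`-weighted small circle integrals, its value
at the center is zero. -/
lemma analytic_center_zero_of_circles {g : ℂ → ℂ} {a : ℂ}
    (hg : AnalyticAt ℂ g a)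
    (H : ∃ ε₁ > (0:ℝ), ∀ ε : ℝ, 0 < ε → ε < ε₁ → (∮ z in C(a, ε), (z - a)⁻¹ * g z) = 0) :
    g a = 0 := by
  obtain ⟨ε₁, hε₁, H⟩ := H
  obtain ⟨r, hr, hball⟩ : ∃ r > 0, ∀ z, dist z a < r → AnalyticAt ℂ g z := by
    have := hg.eventually_analyticAt
    rw [Metric.eventually_nhds_iff] at this
    obtain ⟨δ, hδ, h⟩ := this
    exact ⟨δ, hδ, fun z hz => h hz⟩
  set ε : ℝ := min ε₁ r / 2 with hε
  have hε0 : 0 < ε := by positivity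
  have hεr : ε < r := by
    have : min ε₁ r ≤ r := min_le_right _ _
    simp only [hε]; linarith
  have hεε₁ : ε < ε₁ := by
    have : min ε₁ r ≤ ε₁ := min_le_left _ _
    simp only [hε]; linarith
  have hd : ∀ x ∈ ball a ε \ (∅ : Set ℂ), DifferentiableAt ℂ g x :=
    fun x hx => (hball x (lt_trans (mem_ball.mp hx.1) hεr)).differentiableAt
  have hc : ContinuousOn g (closedBall a ε) := by
    intro x hx
    have : dist x a < r := lt_of_le_of_lt (mem_closedBall.mp hx) hεr
    exact ((hball x this).continuousAt).continuousWithinAt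
  have key := Complex.two_pi_I_inv_smul_circleIntegral_sub_inv_smul_of_differentiable_on_off_countable
    (s := ∅) countable_empty (Metric.mem_ball_self hε0) hc hd
  have hzero : (∮ z in C(a, ε), (z - a)⁻¹ • g z) = 0 := by
    have := H ε hε0 hεε₁
    simpa [smul_eq_mul] using this
  rw [hzero, smul_zero] at key
  exact key.symm

/-- A meromorphic function whose weighted small circle integrals all vanish agrees with an
analytic function on a punctured neighborhood. -/
lemma meromorphic_analytic_of_integrals_zero {f : ℂ → ℂ} {a : ℂ}
    (hf : MeromorphicAt f a)
    (H : ∀ m : ℕ, ∃ ε₁ > (0:ℝ), ∀ ε : ℝ, 0 < ε → ε < ε₁ →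
      (∮ z in C(a, ε), ((z - a) ^ m * f z)) = 0) :
    ∃ w : ℂ → ℂ, AnalyticAt ℂ w a ∧ ∀ᶠ z in 𝓝[≠] a, f z = w z := by
  rcases eq_or_ne (meromorphicOrderAt f a) ⊤ with ho | ho
  · exact ⟨0, analyticAt_const, by
      filter_upwards [meromorphicOrderAt_eq_top_iff.mp ho] with z hz; simpa using hz⟩
  · obtain ⟨n, hn⟩ := WithTop.ne_top_iff_exists.mp ho
    obtain ⟨g, hg_an, hg_ne, hg_eq⟩ := (meromorphicOrderAt_eq_int_iff hf).mp hn.symm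
    rcases le_or_gt 0 n with hn0 | hn0
    · -- nonnegative order: f is analytic
      lift n to ℕ using hn0
      refine ⟨fun z => (z - a) ^ (n : ℕ) * g z, ?_, ?_⟩
      · exact (((analyticAt_id.sub analyticAt_const).pow _).mul hg_an)
      · filter_upwards [hg_eq] with z hz
        rw [hz]
        simp [smul_eq_mul, zpow_natCast]
    · -- negative order: contradiction
      exfalso
      set m : ℕ := (-n - 1).toNat with hm
      have hmn : (m : ℤ) = -n - 1 := Int.toNat_of_nonneg (by omega)
      obtain ⟨ε₁, hε₁, Hm⟩ := H m
      obtain ⟨r, hr, hball⟩ := eventually_punctured_ball hg_eq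
      apply hg_ne
      apply analytic_center_zero_of_circles hg_an
      refine ⟨min ε₁ r, by positivity, ?_⟩
      intro ε hε0 hεlt
      have hεε₁ : ε < ε₁ := lt_of_lt_of_le hεlt (min_le_left _ _)
      have hεr : ε < r := lt_of_lt_of_le hεlt (min_le_right _ _)
      have hEq : EqOn (fun z => (z - a) ^ m * f z) (fun z => (z - a)⁻¹ * g z) (sphere a ε) := by
        intro z hz
        have hza : z ≠ a := by
          intro h
          rw [mem_sphere, h, dist_self] at hz
          linarith
        have hzr : dist z a < r := by rw [mem_sphere] at hz; rw [hz]; exact hεr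
        have hfz := hball z hza hzr
        have hsub : z - a ≠ 0 := sub_ne_zero.mpr hza
        show (z - a) ^ m * f z = (z - a)⁻¹ * g z
        rw [hfz, smul_eq_mul, ← mul_assoc]
        congr 1
        have h1 : ((z - a) ^ m : ℂ) * (z - a) ^ n = (z - a) ^ ((m : ℤ) + n) := by
          rw [← zpow_natCast (z - a) m, ← zpow_add₀ hsub]
        rw [h1]
        have h2 : (m : ℤ) + n = -1 := by omega
        rw [h2, zpow_neg, zpow_one]
      calc (∮ z in C(a, ε), (z - a)⁻¹ * g z)
          = ∮ z in C(a, ε), (z - a) ^ m * f z :=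
            (circleIntegral.integral_congr (le_of_lt hε0) hEq).symm
        _ = 0 := Hm ε hε0 hεε₁

lemma analyticAt_det {n : ℕ} {f : ℂ → Matrix (Fin n) (Fin n) ℂ} {a : ℂ}
    (h : ∀ i j, AnalyticAt ℂ (fun z => f z i j) a) :
    AnalyticAt ℂ (fun z => (f z).det) a := by
  have heq : (fun z => (f z).det) =
      fun z => ∑ σ : Equiv.Perm (Fin n), ((Equiv.Perm.sign σ : ℤ) : ℂ) * ∏ i, f z (σ i) i := by
    funext z
    rw [Matrix.det_apply]
    congr 1
    funext σ
    rw [Units.smul_def, zsmul_eq_mul]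
  rw [heq]
  apply Finset.analyticAt_fun_sum
  intro σ _
  exact analyticAt_const.mul (Finset.analyticAt_fun_prod _ (fun i _ => h (σ i) i))

/-- An analytic family of operators between finite-dimensional spaces which is eventually
bijective on a punctured neighborhood admits a meromorphic (right) inverse family. -/
lemma exists_mero_inverse {E F : Type*} [NormedAddCommGroup E] [NormedSpace ℂ E]
    [FiniteDimensional ℂ E] [NormedAddCommGroup F] [NormedSpace ℂ F] [FiniteDimensional ℂ F]
    {T : ℂ → (E →L[ℂ] F)} {a : ℂ} (hT : AnalyticAt ℂ T a)
    (hbij : ∀ᶠ σ in 𝓝[≠] a, Function.Bijective (T σ)) :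
    ∃ N : ℂ → (F →L[ℂ] E), MeromorphicAt N a ∧
      ∀ᶠ σ in 𝓝[≠] a, ∀ y, T σ (N σ y) = y := by
  obtain ⟨σ₁, hσ₁⟩ := hbij.exists
  have hdim : Module.finrank ℂ F = Module.finrank ℂ E :=
    (LinearEquiv.ofBijective ((T σ₁ : E →ₗ[ℂ] F)) hσ₁).finrank_eq.symm
  set n := Module.finrank ℂ E with hn
  let bE : Module.Basis (Fin n) ℂ E := Module.finBasis ℂ E
  let bF : Module.Basis (Fin n) ℂ F := (Module.finBasis ℂ F).reindex (finCongr hdim)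
  set M : ℂ → Matrix (Fin n) (Fin n) ℂ :=
    fun σ => LinearMap.toMatrix bE bF (T σ : E →ₗ[ℂ] F) with hMdef
  have hM : ∀ i j, AnalyticAt ℂ (fun σ => M σ i j) a := by
    intro i j
    let L : (E →L[ℂ] F) →L[ℂ] ℂ :=
      (LinearMap.toContinuousLinearMap (bF.coord i)).comp (ContinuousLinearMap.apply ℂ F (bE j))
    have heq : (fun σ => M σ i j) = fun σ => L (T σ) := by
      funext σ
      simp [hMdef, LinearMap.toMatrix_apply, L, Module.Basis.coord_apply]
    rw [heq]
    exact (L.analyticAt _).comp hT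
  set d : ℂ → ℂ := fun σ => (M σ).det with hddef
  have hd_an : AnalyticAt ℂ d a := analyticAt_det hM
  have hAdj : ∀ i j, AnalyticAt ℂ (fun σ => (M σ).adjugate i j) a := by
    intro i j
    have heq : (fun σ => (M σ).adjugate i j) =
        fun σ => ((M σ).updateRow j (Pi.single i 1)).det := by
      funext σ; rw [Matrix.adjugate_apply]
    rw [heq]
    apply analyticAt_det
    intro i' j'
    rcases eq_or_ne i' j with rfl | hne
    · simp only [Matrix.updateRow_apply, if_pos rfl]
      exact analyticAt_const
    · simp only [Matrix.updateRow_apply, if_neg hne]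
      exact hM i' j'
  let CmatL : Matrix (Fin n) (Fin n) ℂ →ₗ[ℂ] (F →L[ℂ] E) :=
    (LinearMap.toContinuousLinearMap : (F →ₗ[ℂ] E) ≃ₗ[ℂ] (F →L[ℂ] E)).toLinearMap ∘ₗ
      (Matrix.toLin bF bE).toLinearMap
  have hAcl : AnalyticAt ℂ (fun σ => CmatL ((M σ).adjugate)) a := by
    have hrep : ∀ σ, CmatL ((M σ).adjugate) =
        ∑ i : Fin n, ∑ j : Fin n,
          (M σ).adjugate i j • CmatL (Matrix.single i j 1) := by
      intro σ
      conv_lhs => rw [Matrix.matrix_eq_sum_single ((M σ).adjugate)]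
      rw [map_sum]
      congr 1
      funext i
      rw [map_sum]
      congr 1
      funext j
      rw [← map_smul, Matrix.smul_single, smul_eq_mul, mul_one]
    simp only [hrep]
    apply Finset.analyticAt_fun_sum
    intro i _
    apply Finset.analyticAt_fun_sum
    intro j _
    exact (hAdj i j).smul analyticAt_const
  set N : ℂ → (F →L[ℂ] E) := fun σ => (d σ)⁻¹ • CmatL ((M σ).adjugate) with hNdef
  have hd0 : ∀ᶠ σ in 𝓝[≠] a, d σ ≠ 0 := by
    filter_upwards [hbij] with σ hσ
    intro h0
    let e := LinearEquiv.ofBijective ((T σ : E →ₗ[ℂ] F)) hσ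
    have hcomp : ((T σ : E →ₗ[ℂ] F) ∘ₗ (e.symm : F →ₗ[ℂ] E)) = LinearMap.id := by
      ext y
      show (T σ) (e.symm y) = y
      exact e.apply_symm_apply y
    have h1 : M σ * LinearMap.toMatrix bF bE (e.symm : F →ₗ[ℂ] E) = 1 := by
      rw [hMdef]
      rw [← LinearMap.toMatrix_comp bF bE bF _ _, hcomp, LinearMap.toMatrix_id]
    have h2 := congrArg Matrix.det h1
    rw [Matrix.det_mul, Matrix.det_one] at h2
    rw [show (M σ).det = d σ from rfl, h0, zero_mul] at h2
    exact zero_ne_one h2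
  refine ⟨N, ?_, ?_⟩
  · exact (hd_an.meromorphicAt.inv).smul hAcl.meromorphicAt
  · filter_upwards [hd0] with σ hσd
    intro y
    show T σ (((d σ)⁻¹ • CmatL ((M σ).adjugate)) y) = y
    rw [ContinuousLinearMap.smul_apply, map_smul]
    have happ : T σ (CmatL ((M σ).adjugate) y) =
        Matrix.toLin bF bF (M σ * (M σ).adjugate) y := by
      rw [Matrix.toLin_mul bF bE bF]
      have h3 : CmatL ((M σ).adjugate) y = Matrix.toLin bF bE ((M σ).adjugate) y := rfl
      rw [h3]
      have h4 : (T σ) (Matrix.toLin bF bE ((M σ).adjugate) y) =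
          (Matrix.toLin bE bF (M σ)) (Matrix.toLin bF bE ((M σ).adjugate) y) := by
        rw [hMdef, Matrix.toLin_toMatrix]
        rfl
      rw [h4]
      rfl
    rw [happ, Matrix.mul_adjugate]
    rw [map_smul]
    rw [show (M σ).det = d σ from rfl]
    rw [Matrix.toLin_one]
    show (d σ)⁻¹ • (d σ • y) = y
    rw [smul_smul, inv_mul_cancel₀ hσd, one_smul]

set_option maxHeartbeats 1000000
/-- The canonical residue pairing
`[u,v]_{P,σ₀} = (1/2π) ∮_{|σ−σ₀|=ε} ⟨P(σ)u(σ), v(σ̄)⟩ dσ` between meromorphic germs `u`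
with `P·u` holomorphic at `σ₀` and meromorphic germs `v` with `P⋆·v` holomorphic at
`σ̄₀` (where `P⋆(σ) = P(σ̄)*`): it vanishes when `u` or `v` is holomorphic, and the
induced pairing `Ê_{σ₀} × Ê⋆_{σ̄₀} → ℂ` is nondegenerate. -/

theorem stmt_10 {K R : Type*}
    [NormedAddCommGroup K] [InnerProductSpace ℂ K] [FiniteDimensional ℂ K]
    [NormedAddCommGroup R] [InnerProductSpace ℂ R] [FiniteDimensional ℂ R]
    (σ₀ : ℂ) (P : ℂ → (K →L[ℂ] R)) (hP : AnalyticAt ℂ P σ₀)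
    (hinv : ∀ᶠ σ in nhdsWithin σ₀ {σ₀}ᶜ, Function.Bijective (P σ))
    (hzero : P σ₀ = 0) :
    (∀ (u : ℂ → K) (v : ℂ → R),
      MeromorphicAt u σ₀ → MeromorphicAt v ((starRingEnd ℂ) σ₀) →
      (∃ g : ℂ → R, AnalyticAt ℂ g σ₀ ∧
        ∀ᶠ σ in nhdsWithin σ₀ {σ₀}ᶜ, g σ = P σ (u σ)) →
      (∃ g : ℂ → K, AnalyticAt ℂ g ((starRingEnd ℂ) σ₀) ∧
        ∀ᶠ σ in nhdsWithin ((starRingEnd ℂ) σ₀) {((starRingEnd ℂ) σ₀)}ᶜ,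
          g σ = ContinuousLinearMap.adjoint (P ((starRingEnd ℂ) σ)) (v σ)) →
      ((∃ w : ℂ → K, AnalyticAt ℂ w σ₀ ∧
          ∀ᶠ σ in nhdsWithin σ₀ {σ₀}ᶜ, u σ = w σ) ∨
       (∃ w : ℂ → R, AnalyticAt ℂ w ((starRingEnd ℂ) σ₀) ∧
          ∀ᶠ σ in nhdsWithin ((starRingEnd ℂ) σ₀) {((starRingEnd ℂ) σ₀)}ᶜ, v σ = w σ)) →
      ∃ ε₀ > (0 : ℝ), ∀ ε : ℝ, 0 < ε → ε < ε₀ →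
        (1 / (2 * Real.pi) : ℂ) *
          (∮ σ in C(σ₀, ε), (inner ℂ (v ((starRingEnd ℂ) σ)) (P σ (u σ)) : ℂ)) = 0) ∧
    (∀ u : ℂ → K, MeromorphicAt u σ₀ →
      (∃ g : ℂ → R, AnalyticAt ℂ g σ₀ ∧
        ∀ᶠ σ in nhdsWithin σ₀ {σ₀}ᶜ, g σ = P σ (u σ)) →
      (∀ v : ℂ → R, MeromorphicAt v ((starRingEnd ℂ) σ₀) →
        (∃ g : ℂ → K, AnalyticAt ℂ g ((starRingEnd ℂ) σ₀) ∧
          ∀ᶠ σ in nhdsWithin ((starRingEnd ℂ) σ₀) {((starRingEnd ℂ) σ₀)}ᶜ,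
            g σ = ContinuousLinearMap.adjoint (P ((starRingEnd ℂ) σ)) (v σ)) →
        ∃ ε₀ > (0 : ℝ), ∀ ε : ℝ, 0 < ε → ε < ε₀ →
          (1 / (2 * Real.pi) : ℂ) *
            (∮ σ in C(σ₀, ε), (inner ℂ (v ((starRingEnd ℂ) σ)) (P σ (u σ)) : ℂ)) = 0) →
      ∃ w : ℂ → K, AnalyticAt ℂ w σ₀ ∧
        ∀ᶠ σ in nhdsWithin σ₀ {σ₀}ᶜ, u σ = w σ) ∧
    (∀ v : ℂ → R, MeromorphicAt v ((starRingEnd ℂ) σ₀) →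
      (∃ g : ℂ → K, AnalyticAt ℂ g ((starRingEnd ℂ) σ₀) ∧
        ∀ᶠ σ in nhdsWithin ((starRingEnd ℂ) σ₀) {((starRingEnd ℂ) σ₀)}ᶜ,
          g σ = ContinuousLinearMap.adjoint (P ((starRingEnd ℂ) σ)) (v σ)) →
      (∀ u : ℂ → K, MeromorphicAt u σ₀ →
        (∃ g : ℂ → R, AnalyticAt ℂ g σ₀ ∧
          ∀ᶠ σ in nhdsWithin σ₀ {σ₀}ᶜ, g σ = P σ (u σ)) →
        ∃ ε₀ > (0 : ℝ), ∀ ε : ℝ, 0 < ε → ε < ε₀ →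
          (1 / (2 * Real.pi) : ℂ) *
            (∮ σ in C(σ₀, ε), (inner ℂ (v ((starRingEnd ℂ) σ)) (P σ (u σ)) : ℂ)) = 0) →
      ∃ w : ℂ → R, AnalyticAt ℂ w ((starRingEnd ℂ) σ₀) ∧
        ∀ᶠ σ in nhdsWithin ((starRingEnd ℂ) σ₀) {((starRingEnd ℂ) σ₀)}ᶜ, v σ = w σ) := by
  have hπ : (1 / (2 * Real.pi) : ℂ) ≠ 0 := by
    apply one_div_ne_zero
    simp [Real.pi_ne_zero, Complex.ofReal_ne_zero]
  set ac : ℂ := (starRingEnd ℂ) σ₀ with hac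
  have hacconj : (starRingEnd ℂ) ac = σ₀ := Complex.conj_conj σ₀
  have hconj_to : Tendsto (starRingEnd ℂ) (𝓝[≠] σ₀) (𝓝[≠] ac) := tendsto_conj_punctured σ₀
  have hconj_back : Tendsto (starRingEnd ℂ) (𝓝[≠] ac) (𝓝[≠] σ₀) := by
    have := tendsto_conj_punctured ac
    rwa [hacconj] at this
  set Q : ℂ → (R →L[ℂ] K) :=
    fun τ => ContinuousLinearMap.adjoint (P ((starRingEnd ℂ) τ)) with hQdef
  have hQan : AnalyticAt ℂ Q ac := by
    have := analyticAt_conj_comp (b := σ₀) hP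
      (fun T : K →L[ℂ] R => ContinuousLinearMap.adjoint T)
      (fun x y => map_add _ x y)
      (fun c x => LinearIsometryEquiv.map_smulₛₗ _ c x)
      (LinearIsometryEquiv.continuous _)
    exact this
  have hQbij : ∀ᶠ τ in 𝓝[≠] ac, Function.Bijective (Q τ) := by
    filter_upwards [hconj_back.eventually hinv] with τ hτ
    set c : ℂ := (starRingEnd ℂ) τ
    let e := LinearEquiv.ofBijective ((P c : K →ₗ[ℂ] R)) hτ
    let S : R →L[ℂ] K := LinearMap.toContinuousLinearMap (e.symm : R →ₗ[ℂ] K)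
    have h1 : (P c) ∘L S = ContinuousLinearMap.id ℂ R := by
      ext y; exact e.apply_symm_apply y
    have h2 : S ∘L (P c) = ContinuousLinearMap.id ℂ K := by
      ext x; exact e.symm_apply_apply x
    have hA1 : (ContinuousLinearMap.adjoint S) ∘L (ContinuousLinearMap.adjoint (P c)) =
        ContinuousLinearMap.id ℂ R := by
      rw [← ContinuousLinearMap.adjoint_comp, h1, ContinuousLinearMap.adjoint_id]
    have hA2 : (ContinuousLinearMap.adjoint (P c)) ∘L (ContinuousLinearMap.adjoint S) =
        ContinuousLinearMap.id ℂ K := by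
      rw [← ContinuousLinearMap.adjoint_comp, h2, ContinuousLinearMap.adjoint_id]
    refine Function.bijective_iff_has_inverse.mpr
      ⟨ContinuousLinearMap.adjoint S, fun y => ?_, fun x => ?_⟩
    · exact congrArg (fun (T : R →L[ℂ] R) => T y) hA1
    · exact congrArg (fun (T : K →L[ℂ] K) => T x) hA2
  obtain ⟨NQ, hNQ, hNQprop⟩ := exists_mero_inverse hQan hQbij
  obtain ⟨NP, hNP, hNPprop⟩ := exists_mero_inverse hP hinv
  refine ⟨?_, ?_, ?_⟩
  · -- Part 1
    rintro u v hu hv ⟨gu, hgu_an, hgu_eq⟩ ⟨gv, hgv_an, hgv_eq⟩ hcase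
    have key : ∃ Fn : ℂ → ℂ, AnalyticAt ℂ Fn σ₀ ∧
        ∀ᶠ σ in 𝓝[≠] σ₀, (inner ℂ (v ((starRingEnd ℂ) σ)) (P σ (u σ)) : ℂ) = Fn σ := by
      rcases hcase with ⟨w, hw_an, hw_eq⟩ | ⟨w, hw_an, hw_eq⟩
      · refine ⟨fun σ => (inner ℂ (gv ((starRingEnd ℂ) σ)) (w σ) : ℂ), ?_, ?_⟩
        · have hG : AnalyticAt ℂ (fun σ => innerSL ℂ (gv ((starRingEnd ℂ) σ))) σ₀ := by
            have := analyticAt_conj_comp (b := ac) hgv_an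
              (fun x : K => innerSL ℂ x)
              (fun x y => map_add _ x y)
              (fun c x => by simp)
              (map_continuous _)
            rwa [hacconj] at this
          exact hG.clmApply hw_an
        · filter_upwards [hw_eq, hconj_to.eventually hgv_eq] with σ h1 h2
          rw [h1]
          have h3 : gv ((starRingEnd ℂ) σ) =
              ContinuousLinearMap.adjoint (P σ) (v ((starRingEnd ℂ) σ)) := by
            rw [h2, Complex.conj_conj]
          rw [h3]
          exact (ContinuousLinearMap.adjoint_inner_left (P σ) (w σ) (v _)).symm
      · refine ⟨fun σ => (inner ℂ (w ((starRingEnd ℂ) σ)) (gu σ) : ℂ), ?_, ?_⟩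
        · have hG : AnalyticAt ℂ (fun σ => innerSL ℂ (w ((starRingEnd ℂ) σ))) σ₀ := by
            have := analyticAt_conj_comp (b := ac) hw_an
              (fun x : R => innerSL ℂ x)
              (fun x y => map_add _ x y)
              (fun c x => by simp)
              (map_continuous _)
            rwa [hacconj] at this
          exact hG.clmApply hgu_an
        · filter_upwards [hconj_to.eventually hw_eq, hgu_eq] with σ h1 h2
          rw [h1, h2]
    obtain ⟨Fn, hFn_an, hFn_eq⟩ := key
    obtain ⟨r₁, hr₁, hballF⟩ : ∃ r > (0:ℝ), ∀ z, dist z σ₀ < r → AnalyticAt ℂ Fn z := by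
      have := hFn_an.eventually_analyticAt
      rw [Metric.eventually_nhds_iff] at this
      obtain ⟨δ, hδ, h⟩ := this
      exact ⟨δ, hδ, fun z hz => h hz⟩
    obtain ⟨r₂, hr₂, hball_eq⟩ := eventually_punctured_ball hFn_eq
    refine ⟨min r₁ r₂, by positivity, ?_⟩
    intro ε hε0 hεlt
    have hεr₁ : ε < r₁ := lt_of_lt_of_le hεlt (min_le_left _ _)
    have hεr₂ : ε < r₂ := lt_of_lt_of_le hεlt (min_le_right _ _)
    have h1 : (∮ σ in C(σ₀, ε), (inner ℂ (v ((starRingEnd ℂ) σ)) (P σ (u σ)) : ℂ))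
        = ∮ σ in C(σ₀, ε), Fn σ := by
      apply circleIntegral.integral_congr hε0.le
      intro z hz
      have hzd : dist z σ₀ = ε := mem_sphere.mp hz
      have hzne : z ≠ σ₀ := by
        intro h; rw [h, dist_self] at hzd; linarith
      exact hball_eq z hzne (by rw [hzd]; exact hεr₂)
    have h2 : (∮ σ in C(σ₀, ε), Fn σ) = 0 := by
      apply Complex.circleIntegral_eq_zero_of_differentiable_on_off_countable hε0.le
        countable_empty
      · intro z hz
        exact ((hballF z (lt_of_le_of_lt (mem_closedBall.mp hz) hεr₁)).continuousAt).continuousWithinAt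
      · intro z hz
        exact (hballF z (lt_trans (mem_ball.mp hz.1) hεr₁)).differentiableAt
    rw [h1, h2, mul_zero]
  · -- Part 2
    rintro u hu ⟨gu, hgu_an, hgu_eq⟩ H
    set bK := stdOrthonormalBasis ℂ K with hbK
    have hφ : ∀ i, ∃ w : ℂ → ℂ, AnalyticAt ℂ w σ₀ ∧
        ∀ᶠ σ in 𝓝[≠] σ₀, (inner ℂ (bK i) (u σ) : ℂ) = w σ := by
      intro i
      apply meromorphic_analytic_of_integrals_zero (hu.clmComp (innerSL ℂ (bK i)))
      intro m
      set h : ℂ → K := fun τ => ((τ - ac) ^ m : ℂ) • (bK i) with hhdef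
      have hh_an : AnalyticAt ℂ h ac :=
        ((analyticAt_id.sub analyticAt_const).pow _).smul analyticAt_const
      set vtest : ℂ → R := fun τ => NQ τ (h τ) with hvdef
      have hv_mero : MeromorphicAt vtest ac := by
        have heq : vtest = fun τ => ((τ - ac) ^ m : ℂ) • (NQ τ (bK i)) := by
          funext τ; simp [hvdef, hhdef, map_smul]
        rw [heq]
        exact (((analyticAt_id.sub analyticAt_const).pow _).meromorphicAt).smul
          (hNQ.clmComp (ContinuousLinearMap.apply ℂ R (bK i)))
      have hv_adm : ∃ g : ℂ → K, AnalyticAt ℂ g ac ∧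
          ∀ᶠ τ in 𝓝[≠] ac, g τ = ContinuousLinearMap.adjoint (P ((starRingEnd ℂ) τ)) (vtest τ) := by
        refine ⟨h, hh_an, ?_⟩
        filter_upwards [hNQprop] with τ hτ
        exact (hτ (h τ)).symm
      obtain ⟨ε₀, hε₀, Hint⟩ := H vtest hv_mero hv_adm
      have hev : ∀ᶠ σ in 𝓝[≠] σ₀,
          (inner ℂ (vtest ((starRingEnd ℂ) σ)) (P σ (u σ)) : ℂ)
            = (σ - σ₀) ^ m * (inner ℂ (bK i) (u σ) : ℂ) := by
        filter_upwards [hconj_to.eventually hNQprop] with σ hσ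
        have e1 : (inner ℂ (vtest ((starRingEnd ℂ) σ)) (P σ (u σ)) : ℂ)
            = inner ℂ (ContinuousLinearMap.adjoint (P σ) (vtest ((starRingEnd ℂ) σ))) (u σ) :=
          (ContinuousLinearMap.adjoint_inner_left (P σ) (u σ) (vtest _)).symm
        rw [e1]
        have e2 : ContinuousLinearMap.adjoint (P σ) (vtest ((starRingEnd ℂ) σ))
            = h ((starRingEnd ℂ) σ) := by
          have := hσ (h ((starRingEnd ℂ) σ))
          rw [hQdef] at this
          simp only [Complex.conj_conj] at this
          exact this
        rw [e2, hhdef]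
        rw [inner_smul_left]
        congr 1
        simp [hac]
      obtain ⟨r, hr, hball⟩ := eventually_punctured_ball hev
      refine ⟨min ε₀ r, by positivity, ?_⟩
      intro ε hε0 hεlt
      have hεε₀ : ε < ε₀ := lt_of_lt_of_le hεlt (min_le_left _ _)
      have hεr : ε < r := lt_of_lt_of_le hεlt (min_le_right _ _)
      have hI0 := Hint ε hε0 hεε₀
      have hI : (∮ σ in C(σ₀, ε), (inner ℂ (vtest ((starRingEnd ℂ) σ)) (P σ (u σ)) : ℂ)) = 0 := by
        rcases mul_eq_zero.mp hI0 with h' | h'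
        · exact absurd h' hπ
        · exact h'
      calc (∮ z in C(σ₀, ε), (z - σ₀) ^ m * (inner ℂ (bK i) (u z) : ℂ))
          = ∮ σ in C(σ₀, ε), (inner ℂ (vtest ((starRingEnd ℂ) σ)) (P σ (u σ)) : ℂ) := by
            apply circleIntegral.integral_congr hε0.le
            intro z hz
            have hzd : dist z σ₀ = ε := mem_sphere.mp hz
            have hzne : z ≠ σ₀ := by
              intro hcon; rw [hcon, dist_self] at hzd; linarith
            exact (hball z hzne (by rw [hzd]; exact hεr)).symm
        _ = 0 := hI
    choose w hw_an hw_eq using hφ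
    refine ⟨fun σ => ∑ i, w i σ • bK i, ?_, ?_⟩
    · exact Finset.analyticAt_fun_sum _ (fun i _ => (hw_an i).smul analyticAt_const)
    · have hall : ∀ᶠ σ in 𝓝[≠] σ₀, ∀ i, (inner ℂ (bK i) (u σ) : ℂ) = w i σ :=
        eventually_all.mpr hw_eq
      filter_upwards [hall] with σ hσ
      calc u σ = ∑ i, (inner ℂ (bK i) (u σ) : ℂ) • bK i := (bK.sum_repr' (u σ)).symm
        _ = ∑ i, w i σ • bK i := by
            apply Finset.sum_congr rfl
            intro i _
            rw [hσ i]
  · -- Part 3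
    rintro v hv ⟨gv, hgv_an, hgv_eq⟩ H
    set bR := stdOrthonormalBasis ℂ R with hbR
    have hψ : ∀ i, ∃ w : ℂ → ℂ, AnalyticAt ℂ w σ₀ ∧
        ∀ᶠ σ in 𝓝[≠] σ₀, (inner ℂ (v ((starRingEnd ℂ) σ)) (bR i) : ℂ) = w σ := by
      intro i
      have hψmero : MeromorphicAt (fun σ => (inner ℂ (v ((starRingEnd ℂ) σ)) (bR i) : ℂ)) σ₀ := by
        have := meromorphicAt_conj_comp (b := ac) hv
          (fun x : R => (inner ℂ x (bR i) : ℂ))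
          (fun x y => inner_add_left x y _)
          (fun c x => inner_smul_left _ _ _)
          (by
            have hJeq : (fun x : R => (inner ℂ x (bR i) : ℂ)) =
                fun x => (starRingEnd ℂ) (innerSL ℂ (bR i) x) := by
              funext x
              rw [← inner_conj_symm]
              rfl
            rw [hJeq]
            exact Complex.continuous_conj.comp (innerSL ℂ (bR i)).continuous)
        rwa [hacconj] at this
      apply meromorphic_analytic_of_integrals_zero hψmero
      intro m
      set gt : ℂ → R := fun σ => ((σ - σ₀) ^ m : ℂ) • (bR i) with hgtdef
      have hgt_an : AnalyticAt ℂ gt σ₀ :=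
        ((analyticAt_id.sub analyticAt_const).pow _).smul analyticAt_const
      set utest : ℂ → K := fun σ => NP σ (gt σ) with hudef
      have hu_mero : MeromorphicAt utest σ₀ := by
        have heq : utest = fun σ => ((σ - σ₀) ^ m : ℂ) • (NP σ (bR i)) := by
          funext σ; simp [hudef, hgtdef, map_smul]
        rw [heq]
        exact (((analyticAt_id.sub analyticAt_const).pow _).meromorphicAt).smul
          (hNP.clmComp (ContinuousLinearMap.apply ℂ K (bR i)))
      have hu_adm : ∃ g : ℂ → R, AnalyticAt ℂ g σ₀ ∧
          ∀ᶠ σ in 𝓝[≠] σ₀, g σ = P σ (utest σ) := by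
        refine ⟨gt, hgt_an, ?_⟩
        filter_upwards [hNPprop] with σ hσ
        exact (hσ (gt σ)).symm
      obtain ⟨ε₀, hε₀, Hint⟩ := H utest hu_mero hu_adm
      have hev : ∀ᶠ σ in 𝓝[≠] σ₀,
          (inner ℂ (v ((starRingEnd ℂ) σ)) (P σ (utest σ)) : ℂ)
            = (σ - σ₀) ^ m * (inner ℂ (v ((starRingEnd ℂ) σ)) (bR i) : ℂ) := by
        filter_upwards [hNPprop] with σ hσ
        have e1 : P σ (utest σ) = gt σ := hσ (gt σ)
        rw [e1, hgtdef]
        exact inner_smul_right _ _ _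
      obtain ⟨r, hr, hball⟩ := eventually_punctured_ball hev
      refine ⟨min ε₀ r, by positivity, ?_⟩
      intro ε hε0 hεlt
      have hεε₀ : ε < ε₀ := lt_of_lt_of_le hεlt (min_le_left _ _)
      have hεr : ε < r := lt_of_lt_of_le hεlt (min_le_right _ _)
      have hI0 := Hint ε hε0 hεε₀
      have hI : (∮ σ in C(σ₀, ε), (inner ℂ (v ((starRingEnd ℂ) σ)) (P σ (utest σ)) : ℂ)) = 0 := by
        rcases mul_eq_zero.mp hI0 with h' | h'
        · exact absurd h' hπ
        · exact h'
      calc (∮ z in C(σ₀, ε), (z - σ₀) ^ m * (inner ℂ (v ((starRingEnd ℂ) z)) (bR i) : ℂ))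
          = ∮ σ in C(σ₀, ε), (inner ℂ (v ((starRingEnd ℂ) σ)) (P σ (utest σ)) : ℂ) := by
            apply circleIntegral.integral_congr hε0.le
            intro z hz
            have hzd : dist z σ₀ = ε := mem_sphere.mp hz
            have hzne : z ≠ σ₀ := by
              intro hcon; rw [hcon, dist_self] at hzd; linarith
            exact (hball z hzne (by rw [hzd]; exact hεr)).symm
        _ = 0 := hI
    choose w hw_an hw_eq using hψ
    refine ⟨fun τ => ∑ i, (starRingEnd ℂ) (w i ((starRingEnd ℂ) τ)) • bR i, ?_, ?_⟩
    · apply Finset.analyticAt_fun_sum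
      intro i _
      have hconjan : AnalyticAt ℂ (fun τ => (starRingEnd ℂ) (w i ((starRingEnd ℂ) τ))) ac := by
        exact analyticAt_conj_comp (b := σ₀) (hw_an i)
          (fun x : ℂ => (starRingEnd ℂ) x)
          (fun x y => map_add _ x y)
          (fun c x => by simp [smul_eq_mul])
          Complex.continuous_conj
      exact hconjan.smul analyticAt_const
    · have hall : ∀ᶠ σ in 𝓝[≠] σ₀, ∀ i, (inner ℂ (v ((starRingEnd ℂ) σ)) (bR i) : ℂ) = w i σ :=
        eventually_all.mpr hw_eq
      filter_upwards [hconj_back.eventually hall] with τ hτ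
      -- hτ : ∀ i, ⟪v (conj (conj τ)), bR i⟫ = w i (conj τ)
      calc v τ = ∑ i, (inner ℂ (bR i) (v τ) : ℂ) • bR i := (bR.sum_repr' (v τ)).symm
        _ = ∑ i, (starRingEnd ℂ) (w i ((starRingEnd ℂ) τ)) • bR i := by
            apply Finset.sum_congr rfl
            intro i _
            congr 1
            rw [← hτ i, Complex.conj_conj]
            exact (inner_conj_symm _ _).symm
end

section
/- In the setting of the nonsingular residue pairing: with ψ_j chosen so that P·ψ_j = β_j are holomorphic with independent values at σ₀, and dual elements ψ⋆_j = (σ−σ̄₀)^{−μ_j} β̃_j satisfying P⋆ψ⋆_j = β⋆_j holomorphic, if u = Σ_j Σ_{k=0}^{μ_j−1} (σ−σ₀)^k u_{jk} ψ_j and v = Σ_j Σ_{ℓ=0}^{μ_j−1} (σ−σ̄₀)^ℓ v_{jℓ} ψ⋆_j with constants u_{jk}, v_{jℓ} ∈ ℂ, then [u,v]_{P,σ₀} = i Σ_{j=1}^d Σ_{k=0}^{μ_j−1} u_{jk} · conj(v_{j,μ_j−k−1}). -/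
open Complex Metric Finset

lemma circle_sum_aux {ι : Type*} (s : Finset ι) (f : ι → ℂ → ℂ) (c : ℂ) (Rr : ℝ)
    (h : ∀ i ∈ s, CircleIntegrable (f i) c Rr) :
    (∮ z in C(c, Rr), ∑ i ∈ s, f i z) = ∑ i ∈ s, ∮ z in C(c, Rr), f i z := by
  simp only [circleIntegral]
  rw [← intervalIntegral.integral_finset_sum (fun i hi => (h i hi).out)]
  congr 1; ext θ; rw [Finset.smul_sum]

lemma circleIntegrable_finset_sum {ι : Type*} (s : Finset ι) (f : ι → ℂ → ℂ) (c : ℂ) (Rr : ℝ)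
    (h : ∀ i ∈ s, CircleIntegrable (f i) c Rr) :
    CircleIntegrable (fun z => ∑ i ∈ s, f i z) c Rr := by
  classical
  induction s using Finset.induction with
  | empty => simpa using circleIntegrable_const (0 : ℂ) c Rr
  | @insert x s hx ih =>
      simp only [Finset.sum_insert hx]
      exact (h x (Finset.mem_insert_self x s)).add
        (ih fun i hi => h i (Finset.mem_insert_of_mem hi))

lemma circle_term_integrable (c : ℂ) {Rr : ℝ} (hR : 0 < Rr) (A : ℂ) (n : ℤ) :
    CircleIntegrable (fun z => A * (z - c) ^ n) c Rr := by
  have h : CircleIntegrable (fun z => (z - c) ^ n) c Rr := by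
    rw [circleIntegrable_sub_zpow_iff]
    right; right
    simp [Metric.mem_sphere, abs_of_pos hR, hR.ne]
  exact (circleIntegrable_iff _).2 (by
    simpa [mul_comm, smul_eq_mul, mul_left_comm] using (h.out.const_mul A))

lemma circle_term_value (c : ℂ) {Rr : ℝ} (hR : 0 < Rr) (A : ℂ) (n : ℤ) :
    (∮ z in C(c, Rr), A * (z - c) ^ n) =
      if n = -1 then (2 * Real.pi * Complex.I) * A else 0 := by
  have : (fun z => A * (z - c) ^ n) = fun z => A • ((z - c) ^ n : ℂ) := by
    ext z; simp [smul_eq_mul]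
  rw [this, circleIntegral.integral_smul]
  by_cases hn : n = -1
  · subst hn
    simp only [zpow_neg_one, if_pos rfl]
    rw [circleIntegral.integral_sub_inv_of_mem_ball (Metric.mem_ball_self hR)]
    simp [smul_eq_mul]; ring
  · rw [circleIntegral.integral_sub_zpow_of_ne hn, if_neg hn, smul_zero]

/-- Explicit formula for the residue pairing: with `ψ_j` such that `P·ψ_j = β_j` are
holomorphic, `β̃_j` dual holomorphic germs at `σ̄₀` (`⟨β_i(σ), β̃_j(σ̄)⟩ = δ_{ij}`),
`ψ⋆_j = (σ−σ̄₀)^{−μ_j} β̃_j`, and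
`u = Σ_{j,k} (σ−σ₀)^k u_{jk} ψ_j`, `v = Σ_{j,ℓ} (σ−σ̄₀)^ℓ v_{jℓ} ψ⋆_j`, the pairing is
`[u,v]_{P,σ₀} = i Σ_j Σ_k u_{jk} · conj(v_{j,μ_j−k−1})`. -/
theorem stmt_11 {K R : Type*}
    [NormedAddCommGroup K] [InnerProductSpace ℂ K] [FiniteDimensional ℂ K]
    [NormedAddCommGroup R] [InnerProductSpace ℂ R] [FiniteDimensional ℂ R]
    (d : ℕ) (σ₀ : ℂ) (P : ℂ → (K →L[ℂ] R)) (hP : AnalyticAt ℂ P σ₀)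
    (ψ : Fin d → ℂ → K) (β : Fin d → ℂ → R) (βt : Fin d → ℂ → R)
    (ψs : Fin d → ℂ → R) (μ : Fin d → ℕ) (hμ : ∀ j, 0 < μ j)
    (hβa : ∀ j, AnalyticAt ℂ (β j) σ₀)
    (hβψ : ∀ j, ∀ᶠ σ in nhdsWithin σ₀ {σ₀}ᶜ, β j σ = P σ (ψ j σ))
    (hβta : ∀ j, AnalyticAt ℂ (βt j) ((starRingEnd ℂ) σ₀))
    (hdual : ∀ i j, ∀ᶠ σ in nhds σ₀,
      (inner ℂ (βt j ((starRingEnd ℂ) σ)) (β i σ) : ℂ) = if i = j then 1 else 0)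
    (hψs : ∀ j σ, ψs j σ = ((σ - (starRingEnd ℂ) σ₀) ^ ((μ j : ℤ)))⁻¹ • βt j σ)
    (a b : Fin d → ℕ → ℂ) (u : ℂ → K) (v : ℂ → R)
    (hu : ∀ σ, u σ = ∑ j, ∑ k ∈ Finset.range (μ j), ((σ - σ₀) ^ k * a j k) • ψ j σ)
    (hv : ∀ σ, v σ = ∑ j, ∑ ℓ ∈ Finset.range (μ j),
      ((σ - (starRingEnd ℂ) σ₀) ^ ℓ * b j ℓ) • ψs j σ) :
    ∃ ε₀ > (0 : ℝ), ∀ ε : ℝ, 0 < ε → ε < ε₀ →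
      (1 / (2 * Real.pi) : ℂ) *
        (∮ σ in C(σ₀, ε), (inner ℂ (v ((starRingEnd ℂ) σ)) (P σ (u σ)) : ℂ)) =
      Complex.I * ∑ j, ∑ k ∈ Finset.range (μ j),
        a j k * (starRingEnd ℂ) (b j (μ j - k - 1)) := by
  classical
  set f : ℂ → ℂ := fun σ => ∑ j, ∑ k ∈ Finset.range (μ j), ∑ ℓ ∈ Finset.range (μ j),
    (a j k * (starRingEnd ℂ) (b j ℓ)) * (σ - σ₀) ^ ((k : ℤ) + ℓ - μ j) with hf
  -- eventual equality of the integrand with f on the punctured neighborhood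
  have hev : ∀ᶠ σ in nhdsWithin σ₀ {σ₀}ᶜ,
      (inner ℂ (v ((starRingEnd ℂ) σ)) (P σ (u σ)) : ℂ) = f σ := by
    have h1 : ∀ᶠ σ in nhdsWithin σ₀ {σ₀}ᶜ, ∀ j, β j σ = P σ (ψ j σ) :=
      Filter.eventually_all.2 hβψ
    have h2 : ∀ᶠ σ in nhdsWithin σ₀ {σ₀}ᶜ, ∀ i j,
        (inner ℂ (βt j ((starRingEnd ℂ) σ)) (β i σ) : ℂ) = if i = j then 1 else 0 :=
      Filter.Eventually.filter_mono nhdsWithin_le_nhds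
        (Filter.eventually_all.2 fun i => Filter.eventually_all.2 fun j => hdual i j)
    filter_upwards [h1, h2, self_mem_nhdsWithin] with σ hβ hd hσ
    have hσne : σ ≠ σ₀ := hσ
    have hs : σ - σ₀ ≠ 0 := sub_ne_zero.2 hσne
    have hPu : P σ (u σ) = ∑ i, ∑ k ∈ Finset.range (μ i),
        ((σ - σ₀) ^ k * a i k) • β i σ := by
      rw [hu]
      simp only [map_sum, map_smul]
      exact Finset.sum_congr rfl fun i _ => Finset.sum_congr rfl fun k _ => by rw [hβ i]
    have hvv : v ((starRingEnd ℂ) σ) = ∑ j, ∑ ℓ ∈ Finset.range (μ j),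
        ((((starRingEnd ℂ) σ - (starRingEnd ℂ) σ₀) ^ ℓ * b j ℓ) *
          (((starRingEnd ℂ) σ - (starRingEnd ℂ) σ₀) ^ ((μ j : ℤ)))⁻¹) • βt j ((starRingEnd ℂ) σ) := by
      rw [hv]
      simp only [hψs, smul_smul]
    rw [hPu, hvv, hf]
    simp only [sum_inner, inner_sum, inner_smul_left, inner_smul_right, hd]
    simp only [mul_ite, mul_one, mul_zero, Finset.sum_ite_irrel, Finset.sum_const_zero,
      Finset.sum_ite_eq, Finset.mem_univ, if_true]
    refine Finset.sum_congr rfl fun j _ => Finset.sum_congr rfl fun k _ => ?_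
    rw [Finset.mul_sum]
    refine Finset.sum_congr rfl fun ℓ _ => ?_
    simp only [map_mul, map_pow, map_inv₀, map_zpow₀, map_sub, Complex.conj_conj]
    rw [zpow_sub₀ hs, zpow_add₀ hs, zpow_natCast, zpow_natCast]
    field_simp
    ring_nf
    rw [zpow_natCast]
  -- extract a radius
  rw [Filter.Eventually, Metric.mem_nhdsWithin_iff] at hev
  obtain ⟨ε₀, hε₀, hsub⟩ := hev
  refine ⟨ε₀, hε₀, fun ε hε hεlt => ?_⟩
  have hEq : Set.EqOn (fun σ => (inner ℂ (v ((starRingEnd ℂ) σ)) (P σ (u σ)) : ℂ)) f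
      (Metric.sphere σ₀ ε) := by
    intro z hz
    have hdz : dist z σ₀ = ε := hz
    refine hsub ⟨?_, ?_⟩
    · rw [Metric.mem_ball, hdz]
      exact hεlt
    · intro h
      rw [Set.mem_singleton_iff] at h
      rw [h, dist_self] at hdz
      exact hε.ne hdz
  rw [circleIntegral.integral_congr hε.le hEq]
  -- compute the integral of f
  have hint2 : ∀ j, ∀ k ∈ Finset.range (μ j),
      CircleIntegrable (fun σ => ∑ ℓ ∈ Finset.range (μ j),
        (a j k * (starRingEnd ℂ) (b j ℓ)) * (σ - σ₀) ^ ((k : ℤ) + ℓ - μ j)) σ₀ ε :=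
    fun j k _ => circleIntegrable_finset_sum _ _ _ _
      (fun ℓ _ => circle_term_integrable σ₀ hε _ _)
  have hint1 : ∀ j, CircleIntegrable (fun σ => ∑ k ∈ Finset.range (μ j),
      ∑ ℓ ∈ Finset.range (μ j),
        (a j k * (starRingEnd ℂ) (b j ℓ)) * (σ - σ₀) ^ ((k : ℤ) + ℓ - μ j)) σ₀ ε :=
    fun j => circleIntegrable_finset_sum _ _ _ _ (hint2 j)
  rw [hf]
  rw [circle_sum_aux Finset.univ _ σ₀ ε (fun j _ => hint1 j)]
  have : ∀ j : Fin d, (∮ σ in C(σ₀, ε), ∑ k ∈ Finset.range (μ j), ∑ ℓ ∈ Finset.range (μ j),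
      (a j k * (starRingEnd ℂ) (b j ℓ)) * (σ - σ₀) ^ ((k : ℤ) + ℓ - μ j)) =
      ∑ k ∈ Finset.range (μ j), (2 * Real.pi * Complex.I) *
        (a j k * (starRingEnd ℂ) (b j (μ j - k - 1))) := by
    intro j
    rw [circle_sum_aux _ _ σ₀ ε (hint2 j)]
    refine Finset.sum_congr rfl fun k hk => ?_
    rw [circle_sum_aux _ _ σ₀ ε (fun ℓ _ => circle_term_integrable σ₀ hε _ _)]
    rw [Finset.mem_range] at hk
    have hkμ : μ j - k - 1 ∈ Finset.range (μ j) := by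
      rw [Finset.mem_range]; omega
    calc (∑ ℓ ∈ Finset.range (μ j), ∮ σ in C(σ₀, ε),
          (a j k * (starRingEnd ℂ) (b j ℓ)) * (σ - σ₀) ^ ((k : ℤ) + ℓ - μ j))
        = ∑ ℓ ∈ Finset.range (μ j), if ℓ = μ j - k - 1 then
            (2 * Real.pi * Complex.I) * (a j k * (starRingEnd ℂ) (b j ℓ)) else 0 := by
          refine Finset.sum_congr rfl fun ℓ hℓ => ?_
          rw [Finset.mem_range] at hℓ
          rw [circle_term_value σ₀ hε]
          congr 1
          simp only [eq_iff_iff]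
          omega
      _ = (2 * Real.pi * Complex.I) * (a j k * (starRingEnd ℂ) (b j (μ j - k - 1))) := by
          rw [Finset.sum_ite_eq' (Finset.range (μ j)) (μ j - k - 1), if_pos hkμ]
  simp only [this]
  rw [Finset.mul_sum, Finset.mul_sum]
  have hπ : (Real.pi : ℂ) ≠ 0 := Complex.ofReal_ne_zero.2 Real.pi_ne_zero
  refine Finset.sum_congr rfl fun j _ => ?_
  rw [Finset.mul_sum, Finset.mul_sum]
  refine Finset.sum_congr rfl fun k _ => ?_
  field_simp
end

section
/- Let P(σ) : K → R be holomorphic near σ₀ ∈ ℂ with P(σ₀) = 0 and invertible for σ ≠ σ₀, and define P⋆(σ) = P(σ̄)*. If ψ_j ∈ 𝔐_{σ₀}(K) have independent leading coefficients, P·ψ_j = β_j holomorphic with β_j(σ₀) independent, and pole orders μ_j, then the partial multiplicities of P⋆ at σ̄₀ equal those of P at σ₀: μ⋆_j = μ_j for all j. -/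
open Complex Filter Asymptotics Finset

local notation "⟪" x ", " y "⟫" => @inner ℂ _ _ x y

section helpers

lemma differentiableAt_conj_comp' {v : ℂ → ℂ} {σ : ℂ}
    (hv : DifferentiableAt ℂ v ((starRingEnd ℂ) σ)) :
    DifferentiableAt ℂ (fun z => (starRingEnd ℂ) (v ((starRingEnd ℂ) z))) σ := by
  set τ := (starRingEnd ℂ) σ
  set a := deriv v τ
  have hd := hv.hasDerivAt
  rw [hasDerivAt_iff_isLittleO] at hd
  have hconj : Filter.Tendsto (starRingEnd ℂ) (nhds σ) (nhds τ) :=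
    (Complex.continuous_conj.tendsto σ)
  have h2 := hd.comp_tendsto hconj
  have goal : HasDerivAt (fun z => (starRingEnd ℂ) (v ((starRingEnd ℂ) z)))
      ((starRingEnd ℂ) a) σ := by
    rw [hasDerivAt_iff_isLittleO]
    rw [isLittleO_iff] at h2 ⊢
    intro c hc
    filter_upwards [h2 hc] with z hz
    have e1 : (starRingEnd ℂ) (v ((starRingEnd ℂ) z)) - (starRingEnd ℂ) (v τ)
        - (z - σ) • (starRingEnd ℂ) a
        = (starRingEnd ℂ) (v ((starRingEnd ℂ) z) - v τ
            - ((starRingEnd ℂ) z - τ) • a) := by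
      simp only [map_sub, smul_eq_mul, map_mul, τ, Complex.conj_conj]
    rw [e1, RCLike.norm_conj]
    calc ‖v ((starRingEnd ℂ) z) - v τ - ((starRingEnd ℂ) z - τ) • a‖
        ≤ c * ‖(starRingEnd ℂ) z - τ‖ := hz
      _ = c * ‖z - σ‖ := by rw [← map_sub, RCLike.norm_conj]
  exact goal.differentiableAt

lemma analyticAt_conj_comp' {v : ℂ → ℂ} {τ₀ : ℂ} (hv : AnalyticAt ℂ v τ₀) :
    AnalyticAt ℂ (fun z => (starRingEnd ℂ) (v ((starRingEnd ℂ) z))) ((starRingEnd ℂ) τ₀) := by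
  rw [analyticAt_iff_eventually_differentiableAt]
  have h1 : ∀ᶠ τ in nhds τ₀, DifferentiableAt ℂ v τ :=
    hv.eventually_analyticAt.mono (fun τ hτ => hτ.differentiableAt)
  have hconj : Filter.Tendsto (starRingEnd ℂ) (nhds ((starRingEnd ℂ) τ₀)) (nhds τ₀) := by
    have := Complex.continuous_conj.tendsto ((starRingEnd ℂ) τ₀)
    simpa using this
  filter_upwards [hconj.eventually h1] with z hz
  exact differentiableAt_conj_comp' hz

lemma analyticAt_inner_conj_comp {E : Type*} [NormedAddCommGroup E] [InnerProductSpace ℂ E]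
    [FiniteDimensional ℂ E] {f g : ℂ → E} {σ₀ : ℂ}
    (hf : AnalyticAt ℂ f ((starRingEnd ℂ) σ₀)) (hg : AnalyticAt ℂ g σ₀) :
    AnalyticAt ℂ (fun σ => ⟪f ((starRingEnd ℂ) σ), g σ⟫) σ₀ := by
  set b := stdOrthonormalBasis ℂ E
  have key : (fun σ => ⟪f ((starRingEnd ℂ) σ), g σ⟫)
      = fun σ => ∑ k, ((starRingEnd ℂ) (⟪b k, f ((starRingEnd ℂ) σ)⟫)) * ⟪b k, g σ⟫ := by
    funext σ
    rw [← b.sum_inner_mul_inner (f ((starRingEnd ℂ) σ)) (g σ)]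
    congr 1; funext k
    rw [inner_conj_symm]
  rw [key]
  apply Finset.analyticAt_fun_sum
  intro k _
  apply AnalyticAt.mul
  · have hv : AnalyticAt ℂ (fun τ => ⟪b k, f τ⟫) ((starRingEnd ℂ) σ₀) :=
      ((innerSL ℂ (b k)).analyticAt _).comp hf
    have := analyticAt_conj_comp' hv
    simpa using this
  · exact ((innerSL ℂ (b k)).analyticAt _).comp hg

lemma extract_coeff (σ₀ : ℂ) (m n : ℕ) (hm : 0 < m) (hnm : n < m)
    (a b : ℕ → ℂ → ℂ) (A B : ℂ → ℂ)
    (ha : ∀ ℓ, AnalyticAt ℂ (a ℓ) σ₀) (hb : ∀ ℓ, AnalyticAt ℂ (b ℓ) σ₀)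
    (hA : AnalyticAt ℂ A σ₀) (hB : AnalyticAt ℂ B σ₀)
    (heq : ∀ᶠ σ in nhdsWithin σ₀ {σ₀}ᶜ,
      (∑ ℓ ∈ Finset.range m, (σ - σ₀) ^ ((ℓ : ℤ) - (m : ℤ)) * a ℓ σ) + A σ
      = (∑ ℓ ∈ Finset.range n, (σ - σ₀) ^ ((ℓ : ℤ) - (n : ℤ)) * b ℓ σ) + B σ) :
    a 0 σ₀ = 0 := by
  set F : ℂ → ℂ := fun σ =>
    (∑ ℓ ∈ Finset.range m, (σ - σ₀) ^ ℓ * a ℓ σ) + (σ - σ₀) ^ m * A σ with hF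
  set G : ℂ → ℂ := fun σ =>
    (∑ ℓ ∈ Finset.range n, (σ - σ₀) ^ (m - n + ℓ) * b ℓ σ) + (σ - σ₀) ^ m * B σ with hG
  have hFa : AnalyticAt ℂ F σ₀ := by
    apply AnalyticAt.add
    · exact Finset.analyticAt_fun_sum _ fun ℓ _ =>
        (((analyticAt_id.sub analyticAt_const).pow ℓ)).mul (ha ℓ)
    · exact (((analyticAt_id.sub analyticAt_const).pow m)).mul hA
  have hGa : AnalyticAt ℂ G σ₀ := by
    apply AnalyticAt.add
    · exact Finset.analyticAt_fun_sum _ fun ℓ _ =>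
        (((analyticAt_id.sub analyticAt_const).pow _)).mul (hb ℓ)
    · exact (((analyticAt_id.sub analyticAt_const).pow m)).mul hB
  have hFG : ∀ᶠ σ in nhdsWithin σ₀ {σ₀}ᶜ, F σ = G σ := by
    filter_upwards [heq, self_mem_nhdsWithin] with σ hσ hne
    have hsub : σ - σ₀ ≠ 0 := sub_ne_zero.2 hne
    have e1 : F σ = (σ - σ₀) ^ m *
        ((∑ ℓ ∈ Finset.range m, (σ - σ₀) ^ ((ℓ : ℤ) - (m : ℤ)) * a ℓ σ) + A σ) := by
      rw [hF]
      simp only [mul_add, Finset.mul_sum]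
      congr 1
      apply Finset.sum_congr rfl
      intro ℓ _
      rw [← mul_assoc]
      congr 1
      rw [← zpow_natCast (σ - σ₀) m, ← zpow_add₀ hsub, ← zpow_natCast (σ - σ₀) ℓ]
      congr 1
      omega
    have e2 : G σ = (σ - σ₀) ^ m *
        ((∑ ℓ ∈ Finset.range n, (σ - σ₀) ^ ((ℓ : ℤ) - (n : ℤ)) * b ℓ σ) + B σ) := by
      rw [hG]
      simp only [mul_add, Finset.mul_sum]
      congr 1
      apply Finset.sum_congr rfl
      intro ℓ hℓ
      rw [← mul_assoc]
      congr 1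
      rw [← zpow_natCast (σ - σ₀) m, ← zpow_add₀ hsub, ← zpow_natCast (σ - σ₀) (m - n + ℓ)]
      congr 1
      have : ℓ < n := Finset.mem_range.1 hℓ
      omega
    rw [e1, e2, hσ]
  have hlim1 : Filter.Tendsto F (nhdsWithin σ₀ {σ₀}ᶜ) (nhds (F σ₀)) :=
    (hFa.continuousAt.continuousWithinAt).tendsto
  have hlim2 : Filter.Tendsto F (nhdsWithin σ₀ {σ₀}ᶜ) (nhds (G σ₀)) :=
    Filter.Tendsto.congr' (Filter.EventuallyEq.symm hFG)
      (hGa.continuousAt.continuousWithinAt).tendsto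
  have heqv : F σ₀ = G σ₀ := tendsto_nhds_unique hlim1 hlim2
  have hF0 : F σ₀ = a 0 σ₀ := by
    rw [hF]
    simp only [sub_self]
    rw [zero_pow hm.ne']
    rw [Finset.sum_eq_single 0]
    · simp
    · intro ℓ _ hℓ; rw [zero_pow hℓ]; ring
    · intro habs; exact absurd (Finset.mem_range.2 hm) habs
  have hG0 : G σ₀ = 0 := by
    rw [hG]
    simp only [sub_self]
    rw [zero_pow hm.ne']
    have : ∀ ℓ ∈ Finset.range n, (0 : ℂ) ^ (m - n + ℓ) * b ℓ σ₀ = 0 := by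
      intro ℓ _
      rw [zero_pow (by omega : m - n + ℓ ≠ 0)]; ring
    rw [Finset.sum_eq_zero this]; ring
  rw [← hF0, heqv, hG0]

lemma card_le_of_orthog {V : Type*} [NormedAddCommGroup V] [InnerProductSpace ℂ V]
    [FiniteDimensional ℂ V] {d : ℕ} (hV : Module.finrank ℂ V = d)
    (v w : Fin d → V) (hv : LinearIndependent ℂ v) (hw : LinearIndependent ℂ w)
    (A B : Finset (Fin d))
    (horth : ∀ j ∈ B, ∀ i ∉ A, ⟪w j, v i⟫ = 0) : B.card ≤ A.card := by
  classical
  set S : Submodule ℂ V := Submodule.span ℂ (Set.range fun i : {x // x ∈ Aᶜ} => v i) with hS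
  have hvA : LinearIndependent ℂ (fun i : {x // x ∈ Aᶜ} => v i) :=
    hv.comp Subtype.val Subtype.val_injective
  have hrankS : Module.finrank ℂ S = Aᶜ.card := by
    rw [finrank_span_eq_card hvA, Fintype.card_coe]
  have hwB : ∀ j ∈ B, w j ∈ Sᗮ := by
    intro j hj
    rw [Submodule.mem_orthogonal']
    intro u hu
    have hle : S ≤ LinearMap.ker (innerSL ℂ (w j)).toLinearMap := by
      rw [hS, Submodule.span_le]
      rintro _ ⟨i, rfl⟩
      have hiA : (i : Fin d) ∉ A := Finset.mem_compl.1 i.2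
      simp only [SetLike.mem_coe, LinearMap.mem_ker]
      exact horth j hj i hiA
    exact hle hu
  have hwBind : LinearIndependent ℂ (fun j : {x // x ∈ B} => w j) :=
    hw.comp Subtype.val Subtype.val_injective
  have hspan : Submodule.span ℂ (Set.range fun j : {x // x ∈ B} => w j) ≤ Sᗮ := by
    rw [Submodule.span_le]
    rintro _ ⟨j, rfl⟩
    exact hwB j j.2
  have h1 : B.card ≤ Module.finrank ℂ Sᗮ := by
    calc B.card = Module.finrank ℂ (Submodule.span ℂ
          (Set.range fun j : {x // x ∈ B} => w j)) := by
          rw [finrank_span_eq_card hwBind, Fintype.card_coe]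
      _ ≤ Module.finrank ℂ Sᗮ := Submodule.finrank_mono hspan
  have h2 : Module.finrank ℂ S + Module.finrank ℂ Sᗮ = d := by
    rw [Submodule.finrank_add_finrank_orthogonal, hV]
  have h3 : Aᶜ.card = d - A.card := by
    rw [Finset.card_compl]
    congr 1
    simp [Fintype.card_fin]
  have hAd : A.card ≤ d := by
    have := Finset.card_le_univ A
    simpa [Fintype.card_fin] using this
  omega

lemma antitone_count_iff {d : ℕ} (ν : Fin d → ℕ) (hν : Antitone ν) (t : ℕ) (j : Fin d) :
    t ≤ ν j ↔ (j : ℕ) + 1 ≤ (Finset.univ.filter (fun i => t ≤ ν i)).card := by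
  constructor
  · intro ht
    have hsub : Finset.Iic j ⊆ Finset.univ.filter (fun i => t ≤ ν i) := by
      intro i hi
      rw [Finset.mem_Iic] at hi
      rw [Finset.mem_filter]
      exact ⟨Finset.mem_univ i, le_trans ht (hν hi)⟩
    have := Finset.card_le_card hsub
    rwa [Fin.card_Iic] at this
  · intro hcard
    by_contra hlt
    push_neg at hlt
    have hsub : Finset.univ.filter (fun i => t ≤ ν i) ⊆ Finset.Iio j := by
      intro i hi
      rw [Finset.mem_filter] at hi
      rw [Finset.mem_Iio]
      by_contra hge
      push_neg at hge
      exact absurd (le_trans hi.2 (hν hge)) (by omega)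
    have := Finset.card_le_card hsub
    rw [Fin.card_Iio] at this
    omega

end helpers

/-- Equality of partial multiplicities: if `ψ₁,…,ψ_d` is a system for `P` at `σ₀`
(independent leading Laurent coefficients, `P·ψ_j = β_j` holomorphic with `β_j(σ₀)`
independent) with nonincreasing pole orders `μ_j`, and `ψ⋆₁,…,ψ⋆_d` is an analogous
system for `P⋆(σ) = P(σ̄)*` at `σ̄₀` with nonincreasing pole orders `μ⋆_j`, then
`μ⋆_j = μ_j` for all `j`. -/
theorem stmt_12 {K R : Type*}
    [NormedAddCommGroup K] [InnerProductSpace ℂ K] [FiniteDimensional ℂ K]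
    [NormedAddCommGroup R] [InnerProductSpace ℂ R] [FiniteDimensional ℂ R]
    (d : ℕ) (hd : 0 < d)
    (hK : Module.finrank ℂ K = d) (hR : Module.finrank ℂ R = d)
    (σ₀ : ℂ) (P : ℂ → (K →L[ℂ] R)) (hP : AnalyticAt ℂ P σ₀)
    (hinv : ∀ᶠ σ in nhdsWithin σ₀ {σ₀}ᶜ, Function.Bijective (P σ))
    (hzero : P σ₀ = 0)
    -- the system for `P` at `σ₀`
    (ψ : Fin d → ℂ → K) (β : Fin d → ℂ → R) (μ : Fin d → ℕ)
    (c : Fin d → ℕ → K) (h : Fin d → ℂ → K)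
    (hμ : ∀ j, 0 < μ j) (hμmono : Antitone μ)
    (hβa : ∀ j, AnalyticAt ℂ (β j) σ₀)
    (hβψ : ∀ j, ∀ᶠ σ in nhdsWithin σ₀ {σ₀}ᶜ, β j σ = P σ (ψ j σ))
    (hβind : LinearIndependent ℂ (fun j => β j σ₀))
    (hha : ∀ j, AnalyticAt ℂ (h j) σ₀)
    (hlaurent : ∀ j, ∀ᶠ σ in nhdsWithin σ₀ {σ₀}ᶜ,
      ψ j σ = (∑ ℓ ∈ Finset.range (μ j),
        ((σ - σ₀) ^ ((ℓ : ℤ) - (μ j : ℤ))) • c j ℓ) + h j σ)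
    (hcind : LinearIndependent ℂ (fun j => c j 0))
    -- the system for `P⋆` at `σ̄₀`
    (ψs : Fin d → ℂ → R) (βs : Fin d → ℂ → K) (μs : Fin d → ℕ)
    (cs : Fin d → ℕ → R) (hs : Fin d → ℂ → R)
    (hμs : ∀ j, 0 < μs j) (hμsmono : Antitone μs)
    (hβsa : ∀ j, AnalyticAt ℂ (βs j) ((starRingEnd ℂ) σ₀))
    (hβsψ : ∀ j, ∀ᶠ σ in nhdsWithin ((starRingEnd ℂ) σ₀) {((starRingEnd ℂ) σ₀)}ᶜ,
      βs j σ = ContinuousLinearMap.adjoint (P ((starRingEnd ℂ) σ)) (ψs j σ))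
    (hβsind : LinearIndependent ℂ (fun j => βs j ((starRingEnd ℂ) σ₀)))
    (hhsa : ∀ j, AnalyticAt ℂ (hs j) ((starRingEnd ℂ) σ₀))
    (hslaurent : ∀ j, ∀ᶠ σ in nhdsWithin ((starRingEnd ℂ) σ₀) {((starRingEnd ℂ) σ₀)}ᶜ,
      ψs j σ = (∑ ℓ ∈ Finset.range (μs j),
        ((σ - (starRingEnd ℂ) σ₀) ^ ((ℓ : ℤ) - (μs j : ℤ))) • cs j ℓ) + hs j σ)
    (hcsind : LinearIndependent ℂ (fun j => cs j 0)) :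
    ∀ j, μs j = μ j := by
  classical
  -- conjugation maps the punctured neighbourhood of σ₀ to that of conj σ₀
  have hconjT : Filter.Tendsto (starRingEnd ℂ) (nhdsWithin σ₀ {σ₀}ᶜ)
      (nhdsWithin ((starRingEnd ℂ) σ₀) {((starRingEnd ℂ) σ₀)}ᶜ) := by
    have h1 : Filter.Tendsto (starRingEnd ℂ) (nhds σ₀) (nhds ((starRingEnd ℂ) σ₀)) :=
      Complex.continuous_conj.tendsto σ₀
    have h2 : Filter.Tendsto (starRingEnd ℂ) (Filter.principal {σ₀}ᶜ)
        (Filter.principal {((starRingEnd ℂ) σ₀)}ᶜ) := by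
      rw [Filter.tendsto_principal_principal]
      intro x hx
      simp only [Set.mem_compl_iff, Set.mem_singleton_iff] at hx ⊢
      exact fun hc => hx ((starRingEnd ℂ).injective hc)
    exact h1.inf h2
  -- the key scalar identity
  have hkey : ∀ i j : Fin d, ∀ᶠ σ in nhdsWithin σ₀ {σ₀}ᶜ,
      (∑ ℓ ∈ Finset.range (μs j),
          (σ - σ₀) ^ ((ℓ : ℤ) - (μs j : ℤ)) * ⟪cs j ℓ, β i σ⟫)
        + ⟪hs j ((starRingEnd ℂ) σ), β i σ⟫
      = (∑ ℓ ∈ Finset.range (μ i),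
          (σ - σ₀) ^ ((ℓ : ℤ) - (μ i : ℤ)) * ⟪βs j ((starRingEnd ℂ) σ), c i ℓ⟫)
        + ⟪βs j ((starRingEnd ℂ) σ), h i σ⟫ := by
    intro i j
    filter_upwards [hβψ i, hlaurent i, hconjT.eventually (hβsψ j),
      hconjT.eventually (hslaurent j)] with σ E1 E2 E3 E4
    have hcc : (starRingEnd ℂ) ((starRingEnd ℂ) σ) = σ := Complex.conj_conj σ
    rw [hcc] at E3
    have lhs_eq : (∑ ℓ ∈ Finset.range (μs j),
          (σ - σ₀) ^ ((ℓ : ℤ) - (μs j : ℤ)) * ⟪cs j ℓ, β i σ⟫)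
        + ⟪hs j ((starRingEnd ℂ) σ), β i σ⟫
        = ⟪ψs j ((starRingEnd ℂ) σ), β i σ⟫ := by
      rw [E4, inner_add_left, sum_inner]
      congr 1
      apply Finset.sum_congr rfl
      intro ℓ _
      rw [inner_smul_left, map_zpow₀, map_sub, Complex.conj_conj, Complex.conj_conj]
    have mid_eq : ⟪ψs j ((starRingEnd ℂ) σ), β i σ⟫
        = ⟪βs j ((starRingEnd ℂ) σ), ψ i σ⟫ := by
      rw [E1, ← ContinuousLinearMap.adjoint_inner_left, ← E3]
    have rhs_eq : ⟪βs j ((starRingEnd ℂ) σ), ψ i σ⟫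
        = (∑ ℓ ∈ Finset.range (μ i),
            (σ - σ₀) ^ ((ℓ : ℤ) - (μ i : ℤ)) * ⟪βs j ((starRingEnd ℂ) σ), c i ℓ⟫)
          + ⟪βs j ((starRingEnd ℂ) σ), h i σ⟫ := by
      rw [E2, inner_add_right, inner_sum]
      congr 1
      apply Finset.sum_congr rfl
      intro ℓ _
      rw [inner_smul_right]
    rw [lhs_eq, mid_eq, rhs_eq]
  -- analyticity of the coefficient functions
  have ha1 : ∀ (x : R) (i : Fin d), AnalyticAt ℂ (fun σ => ⟪x, β i σ⟫) σ₀ := by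
    intro x i
    have := ((innerSL ℂ x).analyticAt (β i σ₀)).comp (hβa i)
    simpa [Function.comp_def] using this
  have ha2 : ∀ (j : Fin d) (x : K),
      AnalyticAt ℂ (fun σ => ⟪βs j ((starRingEnd ℂ) σ), x⟫) σ₀ :=
    fun j x => analyticAt_inner_conj_comp (hβsa j) analyticAt_const
  have ha3 : ∀ (j i : Fin d),
      AnalyticAt ℂ (fun σ => ⟪hs j ((starRingEnd ℂ) σ), β i σ⟫) σ₀ :=
    fun j i => analyticAt_inner_conj_comp (hhsa j) (hβa i)
  have ha4 : ∀ (j i : Fin d),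
      AnalyticAt ℂ (fun σ => ⟪βs j ((starRingEnd ℂ) σ), h i σ⟫) σ₀ :=
    fun j i => analyticAt_inner_conj_comp (hβsa j) (hha i)
  -- two orthogonality relations
  have orth1 : ∀ i j : Fin d, μ i < μs j → ⟪cs j 0, β i σ₀⟫ = 0 := by
    intro i j hij
    exact extract_coeff σ₀ (μs j) (μ i) (hμs j) hij
      (fun ℓ σ => ⟪cs j ℓ, β i σ⟫) (fun ℓ σ => ⟪βs j ((starRingEnd ℂ) σ), c i ℓ⟫)
      (fun σ => ⟪hs j ((starRingEnd ℂ) σ), β i σ⟫)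
      (fun σ => ⟪βs j ((starRingEnd ℂ) σ), h i σ⟫)
      (fun ℓ => ha1 (cs j ℓ) i) (fun ℓ => ha2 j (c i ℓ)) (ha3 j i) (ha4 j i)
      (hkey i j)
  have orth2 : ∀ i j : Fin d, μs j < μ i → ⟪c i 0, βs j ((starRingEnd ℂ) σ₀)⟫ = 0 := by
    intro i j hij
    have := extract_coeff σ₀ (μ i) (μs j) (hμ i) hij
      (fun ℓ σ => ⟪βs j ((starRingEnd ℂ) σ), c i ℓ⟫) (fun ℓ σ => ⟪cs j ℓ, β i σ⟫)
      (fun σ => ⟪βs j ((starRingEnd ℂ) σ), h i σ⟫)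
      (fun σ => ⟪hs j ((starRingEnd ℂ) σ), β i σ⟫)
      (fun ℓ => ha2 j (c i ℓ)) (fun ℓ => ha1 (cs j ℓ) i) (ha4 j i) (ha3 j i)
      ((hkey i j).mono (fun σ hσ => hσ.symm))
    exact inner_eq_zero_symm.1 this
  -- counting functions agree
  have hcount : ∀ t : ℕ,
      (Finset.univ.filter (fun jj => t ≤ μs jj)).card
      = (Finset.univ.filter (fun ii => t ≤ μ ii)).card := by
    intro t
    apply le_antisymm
    · apply card_le_of_orthog hR (fun ii => β ii σ₀) (fun jj => cs jj 0) hβind hcsind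
      intro jj hjj ii hii
      rw [Finset.mem_filter] at hjj
      have hii' : μ ii < t := by
        by_contra hge
        push_neg at hge
        exact hii (Finset.mem_filter.2 ⟨Finset.mem_univ ii, hge⟩)
      exact orth1 ii jj (lt_of_lt_of_le hii' hjj.2)
    · apply card_le_of_orthog hK (fun jj => βs jj ((starRingEnd ℂ) σ₀))
        (fun ii => c ii 0) hβsind hcind
      intro ii hii jj hjj
      rw [Finset.mem_filter] at hii
      have hjj' : μs jj < t := by
        by_contra hge
        push_neg at hge
        exact hjj (Finset.mem_filter.2 ⟨Finset.mem_univ jj, hge⟩)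
      exact orth2 ii jj (lt_of_lt_of_le hjj' hii.2)
  -- conclude
  intro j
  apply le_antisymm
  · have h1 := (antitone_count_iff μs hμsmono (μs j) j).1 le_rfl
    rw [hcount] at h1
    exact (antitone_count_iff μ hμmono (μs j) j).2 h1
  · have h1 := (antitone_count_iff μ hμmono (μ j) j).1 le_rfl
    rw [← hcount] at h1
    exact (antitone_count_iff μs hμsmono (μ j) j).2 h1
end

section
/- Let H be a Hilbert space, Ω ⊆ ℂ open containing a finite set S, and let Ê be a finite dimensional subspace of 𝔐_{Ω,S}(H)/Hol_Ω(H). Then Ê is saturated (invariant under multiplication by σ) if and only if Ê is invariant under multiplication by τ^{iσ} = e^{iσ log τ} for every τ > 0. -/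
open Complex Filter Topology

lemma aux14_iteratedDeriv_pow (k : ℕ) (j : ℕ) :
    iteratedDeriv j (fun z : ℂ => z ^ k) = fun z => (k.descFactorial j : ℂ) * z ^ (k - j) := by
  induction j with
  | zero => simp [iteratedDeriv_zero]
  | succ j ih =>
    rw [iteratedDeriv_succ, ih]
    funext z
    rw [deriv_const_mul _ (differentiableAt_pow _), deriv_pow_field, Nat.descFactorial_succ,
      Nat.sub_sub]
    push_cast
    ring

lemma aux14_diffIter {E : Type*} [NormedAddCommGroup E] [NormedSpace ℂ E] [CompleteSpace E]
    {f : ℂ → E} (hf : Differentiable ℂ f) (m : ℕ) :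
    Differentiable ℂ (iteratedDeriv m f) := by
  induction m with
  | zero => simpa [iteratedDeriv_zero]
  | succ m ih =>
    rw [iteratedDeriv_succ]
    have h2 : ContDiff ℂ (2 : ℕ) (iteratedDeriv m f) := ih.contDiff
    simpa [iteratedDeriv_one] using h2.differentiable_iteratedDeriv 1 (by norm_num)

lemma aux14_iteratedDeriv_sub {E : Type*} [NormedAddCommGroup E] [NormedSpace ℂ E] [CompleteSpace E]
    {f g : ℂ → E} (hf : Differentiable ℂ f) (hg : Differentiable ℂ g) (j : ℕ) (p : ℂ) :
    iteratedDeriv j (fun z => f z - g z) p = iteratedDeriv j f p - iteratedDeriv j g p := by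
  have := iteratedDerivWithin_sub (Set.mem_univ p) uniqueDiffOn_univ
    (f := f) (g := g) (n := j) (hf.contDiff.contDiffWithinAt) (hg.contDiff.contDiffWithinAt)
  simpa [iteratedDerivWithin_univ, Pi.sub_def] using this

lemma aux14_iteratedDeriv_cmul {f : ℂ → ℂ} (hf : Differentiable ℂ f) (c : ℂ) (j : ℕ) (p : ℂ) :
    iteratedDeriv j (fun z => c * f z) p = c * iteratedDeriv j f p := by
  have := iteratedDerivWithin_const_mul (Set.mem_univ p) uniqueDiffOn_univ
    (f := f) (n := j) c (hf.contDiff.contDiffWithinAt)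
  simpa [iteratedDerivWithin_univ] using this

lemma aux14_iteratedDeriv_sum {ι : Type*} (s : Finset ι) (F : ι → ℂ → ℂ)
    (hF : ∀ i ∈ s, Differentiable ℂ (F i)) (j : ℕ) (p : ℂ) :
    iteratedDeriv j (fun z => ∑ i ∈ s, F i z) p = ∑ i ∈ s, iteratedDeriv j (F i) p := by
  induction s using Finset.cons_induction with
  | empty =>
    simp only [Finset.sum_empty]
    induction j with
    | zero => simp [iteratedDeriv_zero]
    | succ j ihj =>
      rw [iteratedDeriv_succ']
      simpa using ihj
  | cons a s hnot ih =>
    have hFa : Differentiable ℂ (F a) := hF a (Finset.mem_cons_self a s)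
    have hFs : Differentiable ℂ (fun z => ∑ i ∈ s, F i z) :=
      Differentiable.fun_sum (fun i hi => hF i (Finset.mem_cons_of_mem hi))
    simp only [Finset.sum_cons]
    have := iteratedDerivWithin_add (Set.mem_univ p) uniqueDiffOn_univ
      (f := F a) (g := fun z => ∑ i ∈ s, F i z) (n := j)
      (hFa.contDiff.contDiffWithinAt) (hFs.contDiff.contDiffWithinAt)
    have h2 : iteratedDeriv j (fun z => F a z + ∑ i ∈ s, F i z) p
        = iteratedDeriv j (F a) p + iteratedDeriv j (fun z => ∑ i ∈ s, F i z) p := by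
      simpa [iteratedDerivWithin_univ, Pi.add_def] using this
    rw [h2, ih (fun i hi => hF i (Finset.mem_cons_of_mem hi))]


lemma aux14_linear_factor {ψ : ℂ → ℂ} (hψ : Differentiable ℂ ψ) (p : ℂ) (j : ℕ) :
    iteratedDeriv j (fun z => (z - p) * ψ z)
      = fun z => (z - p) * iteratedDeriv j ψ z + (j : ℂ) * iteratedDeriv (j - 1) ψ z := by
  induction j with
  | zero => simp [iteratedDeriv_zero]
  | succ j ih =>
    rw [iteratedDeriv_succ, ih]
    funext z
    have hDj : Differentiable ℂ (iteratedDeriv j ψ) := aux14_diffIter hψ j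
    have hDj1 : Differentiable ℂ (iteratedDeriv (j - 1) ψ) := aux14_diffIter hψ (j - 1)
    have hd1 : DifferentiableAt ℂ (fun z => (z - p) * iteratedDeriv j ψ z) z :=
      ((differentiableAt_fun_id.sub_const p).mul (hDj z))
    have hd2 : DifferentiableAt ℂ (fun z => (j : ℂ) * iteratedDeriv (j - 1) ψ z) z :=
      (differentiableAt_const _).mul (hDj1 z)
    rw [deriv_fun_add hd1 hd2, deriv_fun_mul (differentiableAt_fun_id.sub_const p) (hDj z),
      deriv_const_mul _ (hDj1 z)]
    have hsub : deriv (fun z => z - p) z = 1 := by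
      simpa using deriv_sub_const (f := fun z : ℂ => z) (c := p) (x := z)
    have hstep : (j : ℂ) * deriv (iteratedDeriv (j - 1) ψ) z = (j : ℂ) * iteratedDeriv j ψ z := by
      cases j with
      | zero => simp
      | succ m => simp [← iteratedDeriv_succ]
    rw [hsub, hstep, ← iteratedDeriv_succ]
    push_cast
    ring

lemma aux14_factor (p : ℂ) : ∀ (n : ℕ) (φ : ℂ → ℂ), Differentiable ℂ φ →
    (∀ j < n, iteratedDeriv j φ p = 0) →
    ∃ ψ : ℂ → ℂ, Differentiable ℂ ψ ∧ ∀ z, φ z = (z - p) ^ n * ψ z := by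
  intro n
  induction n with
  | zero => exact fun φ hφ _ => ⟨φ, hφ, fun z => by simp⟩
  | succ n ih =>
    intro φ hφ hvan
    have h0 : φ p = 0 := by simpa [iteratedDeriv_zero] using hvan 0 (Nat.succ_pos n)
    set ψ₀ := dslope φ p with hψ₀def
    have hψ₀ : Differentiable ℂ ψ₀ := by
      intro z
      rcases eq_or_ne z p with rfl | hz
      · obtain ⟨q, hq⟩ := hφ.analyticAt z
        exact hq.has_fpower_series_dslope_fslope.analyticAt.differentiableAt
      · exact (differentiableAt_dslope_of_ne hz).2 (hφ z)
    have heq : ∀ z, φ z = (z - p) * ψ₀ z := by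
      intro z
      have := sub_smul_dslope φ p z
      rw [smul_eq_mul] at this
      rw [← hψ₀def] at this
      rw [h0, sub_zero] at this
      exact this.symm
    have hvan' : ∀ j < n, iteratedDeriv j ψ₀ p = 0 := by
      intro j hj
      have h1 : iteratedDeriv (j + 1) φ p = 0 := hvan (j + 1) (by omega)
      have h2 : φ = fun z => (z - p) * ψ₀ z := funext heq
      rw [h2, aux14_linear_factor hψ₀ p (j + 1)] at h1
      simp only [sub_self, zero_mul, zero_add, Nat.add_sub_cancel] at h1
      have : ((j + 1 : ℕ) : ℂ) ≠ 0 := by exact_mod_cast Nat.succ_ne_zero j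
      exact (mul_eq_zero.mp h1).resolve_left this
    obtain ⟨ψ, hψ, hfac⟩ := ih ψ₀ hψ₀ hvan'
    exact ⟨ψ, hψ, fun z => by rw [heq z, hfac z, pow_succ]; ring⟩


lemma aux14_boost {H : Type*} [NormedAddCommGroup H] [NormedSpace ℂ H]
    {f : ℂ → H} {p : ℂ} {m M : ℕ} (h : AnalyticAt ℂ (fun z => (z - p) ^ m • f z) p)
    (hmM : m ≤ M) : AnalyticAt ℂ (fun z => (z - p) ^ M • f z) p := by
  have heq : (fun z => (z - p) ^ M • f z)
      = fun z => (z - p) ^ (M - m) • ((z - p) ^ m • f z) := by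
    funext z
    rw [smul_smul, ← pow_add, Nat.sub_add_cancel hmM]
  rw [heq]
  exact ((analyticAt_id.sub analyticAt_const).pow _).smul h

lemma aux14_vanish {H : Type*} [NormedAddCommGroup H] [NormedSpace ℂ H]
    {Ω : Set ℂ} {S : Finset ℂ} {f : ℂ → H} {N : ℕ}
    (hfS : ∀ p ∈ S, AnalyticAt ℂ (fun z => (z - p) ^ N • f z) p)
    (hfns : ∀ z ∈ Ω, z ∉ S → AnalyticAt ℂ f z)
    {φ : ℂ → ℂ} (hφ : Differentiable ℂ φ)
    (hvan : ∀ p ∈ S, ∀ j < N, iteratedDeriv j φ p = 0) :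
    ∀ z ∈ Ω, AnalyticAt ℂ (fun σ => φ σ • f σ) z := by
  intro z hz
  by_cases hzS : z ∈ S
  · obtain ⟨ψ, hψ, heq⟩ := aux14_factor z N φ hφ (hvan z hzS)
    have hfun : (fun σ => φ σ • f σ) = fun σ => ψ σ • ((σ - z) ^ N • f σ) := by
      funext σ
      rw [heq σ, smul_smul, mul_comm]
    rw [hfun]
    exact (hψ.analyticAt z).smul (hfS z hzS)
  · exact (hφ.analyticAt z).smul (hfns z hz hzS)


-- jets of cexp (c * ·)
lemma aux14_jet_cexp (t : ℝ) (j : ℕ) (p : ℂ) :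
    iteratedDeriv j (fun σ : ℂ => Complex.exp (I * σ * t)) p
      = (I * t) ^ j * Complex.exp (I * t * p) := by
  have h : (fun σ : ℂ => Complex.exp (I * σ * t)) = fun σ => Complex.exp ((I * t) * σ) := by
    funext σ; ring_nf
  rw [h, iteratedDeriv_cexp_const_mul]

-- the exp coefficient sum
lemma aux14_hasSum_coord (c p : ℂ) (j : ℕ) :
    HasSum (fun k : ℕ => c ^ k / (k.factorial : ℂ) * ((k.descFactorial j : ℂ) * p ^ (k - j)))
      (c ^ j * Complex.exp (c * p)) := by
  have hbase : HasSum (fun m : ℕ => c ^ j * ((c * p) ^ m / (m.factorial : ℂ)))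
      (c ^ j * Complex.exp (c * p)) := by
    have := (NormedSpace.expSeries_div_hasSum_exp (c * p)).mul_left (c ^ j)
    rwa [← Complex.exp_eq_exp_ℂ] at this
  have hinj : Function.Injective (fun m : ℕ => m + j) := add_left_injective j
  rw [← Function.Injective.hasSum_iff hinj ?_]
  · convert hbase using 1
    funext m
    simp only [Function.comp]
    have hfac : ((m.factorial : ℂ)) * (((m + j).descFactorial j : ℂ)) = ((m + j).factorial : ℂ) := by
      have h0 := Nat.factorial_mul_descFactorial (Nat.le_add_left j m)
      rw [Nat.add_sub_cancel] at h0
      exact_mod_cast h0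
    have h1 : ((m.factorial : ℂ)) ≠ 0 := by exact_mod_cast Nat.factorial_ne_zero m
    have h2 : (((m + j).factorial : ℂ)) ≠ 0 := by exact_mod_cast Nat.factorial_ne_zero (m + j)
    have h3 : (((m + j).descFactorial j : ℂ)) ≠ 0 := by
      intro h
      rw [h, mul_zero] at hfac
      exact h2 hfac.symm
    rw [Nat.add_sub_cancel, pow_add, mul_pow]
    field_simp
    rw [← hfac]
    ring
  · intro k hk
    have hkj : k < j := by
      by_contra h
      push_neg at h
      refine hk ⟨k - j, ?_⟩
      show k - j + j = k
      omega
    have : k.descFactorial j = 0 := Nat.descFactorial_eq_zero_iff_lt.2 hkj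
    simp [this]

lemma aux14_jet_poly (S : Finset ℂ) (N : ℕ) (t : ℝ) :
    ∃ (n : ℕ) (c : Fin n → ℂ) (k : Fin n → ℕ), ∀ p ∈ S, ∀ j ≤ N,
      iteratedDeriv j (fun σ : ℂ => Complex.exp (I * σ * t)) p
        = ∑ i, c i * iteratedDeriv j (fun σ : ℂ => σ ^ (k i)) p := by
  classical
  set J := ({x // x ∈ S} → Fin (N + 1) → ℂ) with hJ
  let jetE : (ℂ → ℂ) → J := fun φ p j => iteratedDeriv (j : ℕ) φ (p : ℂ)
  let v : ℕ → J := fun k => jetE (fun σ => σ ^ k)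
  let W : Submodule ℂ J := Submodule.span ℂ (Set.range v)
  have hWclosed : IsClosed (W : Set J) := Submodule.closed_of_finiteDimensional W
  have hsum : HasSum (fun k : ℕ => ((I * t) ^ k / (k.factorial : ℂ)) • v k)
      (jetE (fun σ => Complex.exp (I * σ * t))) := by
    rw [Pi.hasSum]
    intro p
    rw [Pi.hasSum]
    intro j
    have h1 : ∀ k : ℕ, (((I * t) ^ k / (k.factorial : ℂ)) • v k) p j
        = (I * t) ^ k / (k.factorial : ℂ)
          * (((k.descFactorial (j : ℕ)) : ℂ) * (p : ℂ) ^ (k - (j : ℕ))) := by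
      intro k
      simp only [v, jetE, aux14_iteratedDeriv_pow, Pi.smul_apply, smul_eq_mul]
      rfl
    have h2 : jetE (fun σ => Complex.exp (I * σ * t)) p j
        = (I * t) ^ (j : ℕ) * Complex.exp ((I * t) * p) := by
      simp only [jetE]
      rw [aux14_jet_cexp]
    simp only [h1, h2]
    exact aux14_hasSum_coord (I * t) p j
  have hmem : jetE (fun σ => Complex.exp (I * σ * t)) ∈ W := by
    refine hWclosed.mem_of_tendsto hsum.tendsto_sum_nat (Eventually.of_forall fun n => ?_)
    exact Submodule.sum_mem W fun k _ => Submodule.smul_mem W _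
      (Submodule.subset_span ⟨k, rfl⟩)
  rw [Submodule.mem_span_set'] at hmem
  obtain ⟨n, c, g, hg⟩ := hmem
  have hkex : ∀ i : Fin n, ∃ k : ℕ, v k = (g i : J) := fun i => (g i).2
  choose k hk using hkex
  refine ⟨n, c, k, fun p hp j hj => ?_⟩
  have hjN : j < N + 1 := by omega
  calc iteratedDeriv j (fun σ : ℂ => Complex.exp (I * σ * t)) p
      = jetE (fun σ => Complex.exp (I * σ * t)) ⟨p, hp⟩ ⟨j, hjN⟩ := rfl
    _ = (∑ i, c i • (g i : J)) ⟨p, hp⟩ ⟨j, hjN⟩ := by rw [hg]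
    _ = ∑ i, c i * iteratedDeriv j (fun σ : ℂ => σ ^ (k i)) p := by
        rw [Finset.sum_apply, Finset.sum_apply]
        refine Finset.sum_congr rfl fun i _ => ?_
        rw [← hk i]
        rfl


-- derivative in t of the jet coordinate, at t = 0
lemma aux14_coord_hasDerivAt (p : ℂ) (j : ℕ) :
    HasDerivAt (fun t : ℝ => (I * t) ^ j * Complex.exp (I * t * p))
      (I * ((1 : ℕ).descFactorial j : ℂ) * p ^ (1 - j)) 0 := by
  have hu : HasDerivAt (fun z : ℂ => (I * z) ^ j) ((j : ℂ) * (I * 0) ^ (j - 1) * I) 0 := by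
    have h := ((hasDerivAt_id (0 : ℂ)).const_mul I).fun_pow j
    have heq2 : (fun y : ℂ => (I * id y) ^ j) = fun z : ℂ => (I * z) ^ j := by
      funext z; simp
    rw [heq2] at h
    simpa using h
  have hw : HasDerivAt (fun z : ℂ => Complex.exp (I * z * p))
      (Complex.exp (I * 0 * p) * (I * p)) 0 := by
    have h1 : HasDerivAt (fun z : ℂ => I * z * p) (I * p) 0 := by
      have h := ((hasDerivAt_id (0 : ℂ)).const_mul (I * p))
      have heq : (fun y : ℂ => I * p * id y) = fun z : ℂ => I * z * p := by
        funext z; simp; ring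
      rw [heq] at h
      simpa using h
    simpa using h1.cexp
  have hprod := hu.mul hw
  have hreal := hprod.comp_ofReal (z := 0)
  have hval : ((j : ℂ) * (I * 0) ^ (j - 1) * I) * Complex.exp (I * 0 * p)
      + (I * 0) ^ j * (Complex.exp (I * 0 * p) * (I * p))
      = I * ((1 : ℕ).descFactorial j : ℂ) * p ^ (1 - j) := by
    match j with
    | 0 => simp
    | 1 => simp
    | (m + 2) =>
      have h1 : ((m + 2 : ℕ) - 1 : ℕ) = m + 1 := rfl
      simp [zero_pow, Nat.descFactorial]
  rw [hval] at hreal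
  exact hreal

lemma aux14_jet_exp (S : Finset ℂ) (N : ℕ) :
    ∃ (n : ℕ) (c : Fin n → ℂ) (t : Fin n → ℝ), ∀ p ∈ S, ∀ j ≤ N,
      iteratedDeriv j (fun σ : ℂ => σ) p
        = ∑ i, c i * iteratedDeriv j (fun σ : ℂ => Complex.exp (I * σ * (t i))) p := by
  classical
  set J := ({x // x ∈ S} → Fin (N + 1) → ℂ) with hJ
  let jetE : (ℂ → ℂ) → J := fun φ p j => iteratedDeriv (j : ℕ) φ (p : ℂ)
  let γ : ℝ → J := fun t => jetE (fun σ => Complex.exp (I * σ * t))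
  let W : Submodule ℂ J := Submodule.span ℂ (Set.range γ)
  have hWclosed : IsClosed (W : Set J) := Submodule.closed_of_finiteDimensional W
  let jetid : J := jetE (fun σ => σ)
  have hidpow : (fun σ : ℂ => σ) = fun σ : ℂ => σ ^ 1 := by funext σ; rw [pow_one]
  have hD : HasDerivAt γ (I • jetid) 0 := by
    rw [hasDerivAt_pi]
    intro p
    rw [hasDerivAt_pi]
    intro j
    have hco : (fun t : ℝ => γ t p j)
        = fun t : ℝ => (I * (t : ℂ)) ^ (j : ℕ) * Complex.exp (I * t * p) :=
      funext fun t => aux14_jet_cexp t j p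
    have hval : (I • jetid) p j
        = I * ((1 : ℕ).descFactorial (j : ℕ) : ℂ) * (p : ℂ) ^ (1 - (j : ℕ)) := by
      show I * (iteratedDeriv (j : ℕ) (fun σ : ℂ => σ) (p : ℂ)) = _
      rw [hidpow, aux14_iteratedDeriv_pow]
      ring
    rw [hco, hval]
    exact aux14_coord_hasDerivAt p j
  have hslope : ∀ t : ℝ, slope γ 0 t ∈ W := by
    intro t
    rw [slope_def_module]
    exact Submodule.smul_of_tower_mem W _
      (sub_mem (Submodule.subset_span ⟨t, rfl⟩) (Submodule.subset_span ⟨0, rfl⟩))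
  have hmem1 : I • jetid ∈ W := by
    have ht := hasDerivAt_iff_tendsto_slope.1 hD
    exact hWclosed.mem_of_tendsto ht (Eventually.of_forall fun t => hslope t)
  have hmem : jetid ∈ W := by
    have h2 : jetid = (-I) • (I • jetid) := by
      rw [smul_smul, neg_mul, Complex.I_mul_I, neg_neg, one_smul]
    rw [h2]
    exact Submodule.smul_mem W _ hmem1
  rw [Submodule.mem_span_set'] at hmem
  obtain ⟨n, c, g, hg⟩ := hmem
  have htex : ∀ i : Fin n, ∃ t : ℝ, γ t = (g i : J) := fun i => (g i).2
  choose t ht using htex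
  refine ⟨n, c, t, fun p hp j hj => ?_⟩
  have hjN : j < N + 1 := by omega
  calc iteratedDeriv j (fun σ : ℂ => σ) p
      = jetid ⟨p, hp⟩ ⟨j, hjN⟩ := rfl
    _ = (∑ i, c i • (g i : J)) ⟨p, hp⟩ ⟨j, hjN⟩ := by rw [hg]
    _ = ∑ i, c i * iteratedDeriv j (fun σ : ℂ => Complex.exp (I * σ * (t i))) p := by
        rw [Finset.sum_apply, Finset.sum_apply]
        refine Finset.sum_congr rfl fun i _ => ?_
        rw [← ht i]
        rfl

lemma aux14_key {H : Type*} [NormedAddCommGroup H] [NormedSpace ℂ H]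
    {Ω : Set ℂ} {S : Finset ℂ}
    {E : Submodule ℂ (ℂ → H)}
    (hhol : ∀ f : ℂ → H, (∀ z ∈ Ω, AnalyticAt ℂ f z) → f ∈ E)
    {f : ℂ → H} (hfns : ∀ z ∈ Ω, z ∉ S → AnalyticAt ℂ f z)
    {N : ℕ} (hfS : ∀ p ∈ S, AnalyticAt ℂ (fun z => (z - p) ^ N • f z) p)
    {n : ℕ} (c : Fin n → ℂ) (mult : Fin n → ℂ → ℂ)
    (hmultd : ∀ i, Differentiable ℂ (mult i))
    (hmem : ∀ i, (fun σ => mult i σ • f σ) ∈ E)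
    (target : ℂ → ℂ) (htd : Differentiable ℂ target)
    (hjets : ∀ p ∈ S, ∀ j ≤ N,
      iteratedDeriv j target p = ∑ i, c i * iteratedDeriv j (mult i) p) :
    (fun σ => target σ • f σ) ∈ E := by
  classical
  set φ : ℂ → ℂ := fun z => target z - ∑ i, c i * mult i z with hφdef
  have hsumd : Differentiable ℂ (fun z => ∑ i : Fin n, c i * mult i z) :=
    Differentiable.fun_sum fun i _ => (hmultd i).const_mul (c i)
  have hφd : Differentiable ℂ φ := htd.sub hsumd
  have hφvan : ∀ p ∈ S, ∀ j < N, iteratedDeriv j φ p = 0 := by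
    intro p hp j hj
    rw [hφdef]
    rw [aux14_iteratedDeriv_sub htd hsumd]
    rw [aux14_iteratedDeriv_sum Finset.univ (fun i => fun z => c i * mult i z)
      (fun i _ => (hmultd i).const_mul (c i)) j p]
    have hterm : ∀ i : Fin n, iteratedDeriv j (fun z => c i * mult i z) p
        = c i * iteratedDeriv j (mult i) p := fun i =>
      aux14_iteratedDeriv_cmul (hmultd i) (c i) j p
    rw [Finset.sum_congr rfl fun i _ => hterm i, hjets p hp j (le_of_lt hj), sub_self]
  have han := aux14_vanish hfS hfns hφd hφvan
  have hφmem : (fun σ => φ σ • f σ) ∈ E := hhol _ han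
  have hdecomp : (fun σ => target σ • f σ)
      = (fun σ => φ σ • f σ) + ∑ i, c i • (fun σ => mult i σ • f σ) := by
    funext σ
    simp only [Pi.add_apply, Finset.sum_apply, Pi.smul_apply, hφdef]
    rw [sub_smul]
    have hsum : ∑ i, c i • (mult i σ • f σ) = (∑ i, c i * mult i σ) • f σ := by
      rw [Finset.sum_smul]
      exact Finset.sum_congr rfl fun i _ => by rw [smul_smul]
    rw [hsum, sub_add_cancel]
  rw [hdecomp]
  exact Submodule.add_mem E hφmem
    (Submodule.sum_mem E fun i _ => Submodule.smul_mem E _ (hmem i))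


/-- A finite dimensional subspace `Ê ⊆ 𝔐_{Ω,S}(H)/Hol_Ω(H)` (realized as a submodule
`E` of functions containing all functions holomorphic on `Ω`, whose elements are
meromorphic on `Ω` with poles in the finite set `S`, and which is finite dimensional
modulo holomorphic functions) is saturated — invariant under multiplication by `σ` —
if and only if it is invariant under multiplication by `τ^{iσ}` for every `τ > 0`. -/
theorem stmt_14 {H : Type*} [NormedAddCommGroup H] [NormedSpace ℂ H]
    (Ω : Set ℂ) (hΩ : IsOpen Ω) (S : Finset ℂ) (hS : (S : Set ℂ) ⊆ Ω)
    (E : Submodule ℂ (ℂ → H))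
    (hmero : ∀ f ∈ E, ∀ z ∈ Ω,
      (z ∈ S → MeromorphicAt f z) ∧ (z ∉ S → AnalyticAt ℂ f z))
    (hhol : ∀ f : ℂ → H, (∀ z ∈ Ω, AnalyticAt ℂ f z) → f ∈ E)
    (hfin : ∃ (n : ℕ) (g : Fin n → (ℂ → H)), ∀ f ∈ E, ∃ c : Fin n → ℂ,
      ∀ z ∈ Ω, AnalyticAt ℂ (fun σ => f σ - ∑ i, c i • g i σ) z) :
    (∀ f ∈ E, (fun σ : ℂ => σ • f σ) ∈ E) ↔
      (∀ τ : ℝ, 0 < τ → ∀ f ∈ E,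
        (fun σ : ℂ => Complex.exp (Complex.I * σ * Real.log τ) • f σ) ∈ E) := by
  classical
  -- preliminary: uniform pole order for f ∈ E
  have hN : ∀ f ∈ E, ∃ N : ℕ, ∀ p ∈ S, AnalyticAt ℂ (fun z => (z - p) ^ N • f z) p := by
    intro f hf
    have h1 : ∀ p : {x // x ∈ S}, ∃ m : ℕ,
        AnalyticAt ℂ (fun z => (z - (p : ℂ)) ^ m • f z) (p : ℂ) := by
      intro p
      exact (hmero f hf p (hS p.2)).1 p.2
    choose m hm using h1
    refine ⟨Finset.univ.sup m, fun p hp => ?_⟩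
    exact aux14_boost (hm ⟨p, hp⟩) (Finset.le_sup (f := m) (Finset.mem_univ (⟨p, hp⟩ : {x // x ∈ S})))
  have hfns : ∀ f ∈ E, ∀ z ∈ Ω, z ∉ S → AnalyticAt ℂ f z :=
    fun f hf z hz hzS => (hmero f hf z hz).2 hzS
  constructor
  · -- saturated → exp-invariant
    intro hsat τ hτ f hf
    -- monomial closure
    have hmono : ∀ k : ℕ, ∀ g ∈ E, (fun σ : ℂ => σ ^ k • g σ) ∈ E := by
      intro k
      induction k with
      | zero => intro g hg; simpa [pow_zero, one_smul] using hg
      | succ k ih =>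
        intro g hg
        have h1 := hsat _ (ih g hg)
        have h2 : (fun σ : ℂ => σ • (σ ^ k • g σ)) = fun σ : ℂ => σ ^ (k + 1) • g σ := by
          funext σ
          rw [smul_smul, ← pow_succ']
        rwa [h2] at h1
    obtain ⟨N, hNf⟩ := hN f hf
    obtain ⟨n, c, k, hjets⟩ := aux14_jet_poly S N (Real.log τ)
    exact aux14_key hhol (hfns f hf) hNf c (fun i => fun σ => σ ^ (k i))
      (fun i => differentiable_pow (k i))
      (fun i => hmono (k i) f hf)
      _ (Complex.differentiable_exp.comp
        (((differentiable_id).const_mul I).mul_const _))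
      hjets
  · -- exp-invariant → saturated
    intro hexp f hf
    obtain ⟨N, hNf⟩ := hN f hf
    obtain ⟨n, c, t, hjets⟩ := aux14_jet_exp S N
    have hmemexp : ∀ i : Fin n,
        (fun σ : ℂ => Complex.exp (I * σ * (t i)) • f σ) ∈ E := by
      intro i
      have := hexp (Real.exp (t i)) (Real.exp_pos _) f hf
      simpa [Real.log_exp] using this
    have := aux14_key hhol (hfns f hf) hNf c
      (fun i => fun σ => Complex.exp (I * σ * (t i)))
      (fun i => Complex.differentiable_exp.comp
        (((differentiable_id).const_mul I).mul_const _))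
      hmemexp
      (fun σ : ℂ => σ) differentiable_id hjets
    simpa using this
end

section
/- Let K be a finite dimensional hermitian space and P(σ) : K → K holomorphic near σ₀ ∈ ℝ, selfadjoint in the sense P(σ̄)* = P(σ), positive in the sense that P(σ) ≥ 0 for real σ ≠ σ₀ near σ₀, with P(σ₀) = 0 and P(σ) invertible for σ ≠ σ₀. Then all partial multiplicities μ_j of P at σ₀ are even. -/
open Filter Topology Finset Module Submodule

/-- Evenness of partial multiplicities for a selfadjoint positive holomorphic family
(Lemma EvenPowers): if `P(σ) : K → K` is holomorphic near the real point `σ₀`,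
selfadjoint (`P(σ̄)* = P(σ)`), nonnegative for real `σ ≠ σ₀` near `σ₀`, with
`P(σ₀) = 0` and invertible for `σ ≠ σ₀`, then for any system `ψ₁,…,ψ_d` as in the
structure theorem the pole orders `μ_j` are all even. -/
theorem stmt_15 {K : Type*}
    [NormedAddCommGroup K] [InnerProductSpace ℂ K] [FiniteDimensional ℂ K]
    (σ₀ : ℝ) (P : ℂ → (K →L[ℂ] K)) (hP : AnalyticAt ℂ P (σ₀ : ℂ))
    (hsa : ∀ᶠ σ : ℂ in nhds (σ₀ : ℂ),
      ContinuousLinearMap.adjoint (P ((starRingEnd ℂ) σ)) = P σ)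
    (hpos : ∀ᶠ σ : ℝ in nhds σ₀, σ ≠ σ₀ →
      ∀ x : K, 0 ≤ ((inner ℂ x (P (σ : ℂ) x) : ℂ)).re)
    (hzero : P (σ₀ : ℂ) = 0)
    (hinv : ∀ᶠ σ in nhdsWithin (σ₀ : ℂ) {(σ₀ : ℂ)}ᶜ, Function.Bijective (P σ))
    (d : ℕ) (hd : Module.finrank ℂ K = d)
    (ψ : Fin d → ℂ → K) (β : Fin d → ℂ → K) (μ : Fin d → ℕ)
    (c : Fin d → ℕ → K) (h : Fin d → ℂ → K)
    (hμ : ∀ j, 0 < μ j)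
    (hβa : ∀ j, AnalyticAt ℂ (β j) (σ₀ : ℂ))
    (hβψ : ∀ j, ∀ᶠ σ in nhdsWithin (σ₀ : ℂ) {(σ₀ : ℂ)}ᶜ, β j σ = P σ (ψ j σ))
    (hβind : LinearIndependent ℂ (fun j => β j (σ₀ : ℂ)))
    (hha : ∀ j, AnalyticAt ℂ (h j) (σ₀ : ℂ))
    (hlaurent : ∀ j, ∀ᶠ σ in nhdsWithin (σ₀ : ℂ) {(σ₀ : ℂ)}ᶜ,
      ψ j σ = (∑ ℓ ∈ Finset.range (μ j),
        ((σ - (σ₀ : ℂ)) ^ ((ℓ : ℤ) - (μ j : ℤ))) • c j ℓ) + h j σ)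
    (hcind : LinearIndependent ℂ (fun j => c j 0)) :
    ∀ j, Even (μ j) := by
  classical
  intro j
  by_contra hodd
  have hmodd : Odd (μ j) := Nat.not_even_iff_odd.mp hodd
  set m := μ j with hm
  -- basic notation
  set e : ℝ → ℂ := fun σ => (σ : ℂ) - (σ₀ : ℂ) with he
  have heσ : ∀ σ : ℝ, e σ = ((σ - σ₀ : ℝ) : ℂ) := by intro σ; simp [he]
  have hene : ∀ σ : ℝ, σ ≠ σ₀ → e σ ≠ 0 := by
    intro σ hσ
    rw [heσ]
    exact_mod_cast sub_ne_zero.mpr hσ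
  have hconj_e : ∀ σ : ℝ, (starRingEnd ℂ) (e σ) = e σ := by
    intro σ; rw [heσ]; exact Complex.conj_ofReal _
  set A : Fin d → Fin d → ℝ → ℂ := fun p q σ => inner ℂ (ψ p (σ : ℂ)) (β q (σ : ℂ)) with hA
  set M : Fin d → Fin d → ℂ := fun p q => (inner ℂ (c p 0) (β q (σ₀ : ℂ)) : ℂ) with hM
  -- coercion of filters
  have hcoe : Tendsto (fun σ : ℝ => (σ : ℂ)) (𝓝[≠] σ₀) (𝓝[≠] (σ₀ : ℂ)) := by
    apply tendsto_nhdsWithin_of_tendsto_nhds_of_eventually_within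
    · exact (Complex.continuous_ofReal.tendsto σ₀).mono_left nhdsWithin_le_nhds
    · filter_upwards [self_mem_nhdsWithin] with σ hσ
      simp only [Set.mem_compl_iff, Set.mem_singleton_iff] at hσ ⊢
      exact_mod_cast hσ
  -- pulled-back hypotheses
  have hβψR : ∀ᶠ σ : ℝ in 𝓝[≠] σ₀, ∀ p, β p (σ : ℂ) = P (σ : ℂ) (ψ p (σ : ℂ)) :=
    eventually_all.mpr fun p => hcoe.eventually (hβψ p)
  have hsaR : ∀ᶠ σ : ℝ in 𝓝[≠] σ₀,
      ContinuousLinearMap.adjoint (P (σ : ℂ)) = P (σ : ℂ) := by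
    have := ((Complex.continuous_ofReal.tendsto σ₀).eventually hsa).filter_mono
      (nhdsWithin_le_nhds (s := {σ₀}ᶜ))
    filter_upwards [this] with σ hσ
    rwa [Complex.conj_ofReal] at hσ
  have hposR : ∀ᶠ σ : ℝ in 𝓝[≠] σ₀,
      ∀ x : K, 0 ≤ ((inner ℂ x (P (σ : ℂ) x) : ℂ)).re := by
    filter_upwards [hpos.filter_mono (nhdsWithin_le_nhds (s := {σ₀}ᶜ)),
      self_mem_nhdsWithin] with σ h1 h2
    exact h1 h2
  -- symmetry of the pairing on the reals
  have hAconj : ∀ᶠ σ : ℝ in 𝓝[≠] σ₀, ∀ p q, A p q σ = (starRingEnd ℂ) (A q p σ) := by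
    filter_upwards [hβψR, hsaR] with σ hb hs p q
    rw [hA]
    simp only
    rw [hb p, hb q]
    conv_lhs => rw [← hs]
    rw [ContinuousLinearMap.adjoint_inner_right, inner_conj_symm]
  -- the fundamental limit
  have hL : ∀ p q, Tendsto (fun σ : ℝ => e σ ^ (μ p) * A p q σ) (𝓝[≠] σ₀) (𝓝 (M p q)) := by
    intro p q
    have he0 : Tendsto e (𝓝 σ₀) (𝓝 0) := by
      have hc : Continuous e := by
        rw [he]; exact Complex.continuous_ofReal.sub continuous_const
      have := hc.tendsto σ₀
      simpa [he] using this
    have hΦ : Tendsto (fun σ : ℝ => (∑ ℓ ∈ Finset.range (μ p), e σ ^ ℓ • c p ℓ)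
        + e σ ^ (μ p) • h p (σ : ℂ)) (𝓝 σ₀) (𝓝 (c p 0)) := by
      have hsum : Tendsto (fun σ : ℝ => ∑ ℓ ∈ Finset.range (μ p), e σ ^ ℓ • c p ℓ) (𝓝 σ₀)
          (𝓝 (∑ ℓ ∈ Finset.range (μ p), (0:ℂ) ^ ℓ • c p ℓ)) :=
        tendsto_finset_sum _ fun ℓ _ => (he0.pow ℓ).smul_const _
      have hh : Tendsto (fun σ : ℝ => e σ ^ (μ p) • h p (σ : ℂ)) (𝓝 σ₀)
          (𝓝 (((0:ℂ) ^ (μ p)) • h p ((σ₀ : ℝ) : ℂ))) :=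
        (he0.pow _).smul ((hha p).continuousAt.comp Complex.continuous_ofReal.continuousAt)
      have hval : (∑ ℓ ∈ Finset.range (μ p), (0:ℂ) ^ ℓ • c p ℓ)
          + ((0:ℂ) ^ (μ p)) • h p ((σ₀ : ℝ) : ℂ) = c p 0 := by
        rw [Finset.sum_eq_single 0]
        · simp [zero_pow (hμ p).ne']
        · intro b _ hb; simp [zero_pow hb]
        · intro h0; exact absurd (Finset.mem_range.mpr (hμ p)) h0
      exact hval ▸ (hsum.add hh)
    have hEq : ∀ᶠ σ : ℝ in 𝓝[≠] σ₀, e σ ^ (μ p) * A p q σ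
        = (inner ℂ ((∑ ℓ ∈ Finset.range (μ p), e σ ^ ℓ • c p ℓ)
            + e σ ^ (μ p) • h p (σ : ℂ)) (β q (σ : ℂ)) : ℂ) := by
      filter_upwards [hcoe.eventually (hlaurent p), self_mem_nhdsWithin] with σ hl hσ
      have hσ' : σ ≠ σ₀ := hσ
      rw [hA]; simp only
      conv_lhs => rw [← hconj_e σ, ← map_pow]
      rw [← inner_smul_left]
      congr 1
      have hle : e σ = (σ : ℂ) - (σ₀ : ℂ) := rfl
      rw [hl, smul_add]
      congr 1
      rw [Finset.smul_sum]
      refine Finset.sum_congr rfl fun ℓ hℓ => ?_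
      rw [smul_smul, ← hle, ← zpow_natCast (e σ) (μ p), ← zpow_add₀ (hene σ hσ')]
      have hexp : (μ p : ℤ) + ((ℓ : ℤ) - (μ p : ℤ)) = (ℓ : ℤ) := by ring
      rw [hexp, zpow_natCast]
    have hlim2 : Tendsto (fun σ : ℝ => (inner ℂ ((∑ ℓ ∈ Finset.range (μ p), e σ ^ ℓ • c p ℓ)
            + e σ ^ (μ p) • h p (σ : ℂ)) (β q (σ : ℂ)) : ℂ)) (𝓝[≠] σ₀)
        (𝓝 (inner ℂ (c p 0) (β q ((σ₀ : ℝ) : ℂ)))) :=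
      Filter.Tendsto.inner (hΦ.mono_left nhdsWithin_le_nhds)
        (((hβa q).continuousAt.comp Complex.continuous_ofReal.continuousAt).tendsto.mono_left
          nhdsWithin_le_nhds)
    exact Filter.Tendsto.congr' (Filter.EventuallyEq.symm hEq) hlim2
  -- triangularity
  have hD : ∀ p q, μ q < μ p → M p q = 0 := by
    intro p q hqp
    refine tendsto_nhds_unique (hL p q) ?_
    have h0 : Tendsto (fun σ : ℝ => e σ ^ (μ p - μ q)) (𝓝[≠] σ₀) (𝓝 0) := by
      have hc : Continuous e := by
        rw [he]; exact Complex.continuous_ofReal.sub continuous_const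
      have := (hc.tendsto σ₀).mono_left (nhdsWithin_le_nhds (s := {σ₀}ᶜ))
      have h1 : Tendsto (fun σ : ℝ => e σ ^ (μ p - μ q)) (𝓝[≠] σ₀) (𝓝 ((e σ₀) ^ (μ p - μ q))) :=
        this.pow _
      have h2 : (e σ₀) ^ (μ p - μ q) = 0 := by
        have : e σ₀ = 0 := by simp [he]
        rw [this, zero_pow (by omega)]
      rwa [h2] at h1
    have hconjlim : Tendsto (fun σ : ℝ => (starRingEnd ℂ) (e σ ^ (μ q) * A q p σ)) (𝓝[≠] σ₀)
        (𝓝 ((starRingEnd ℂ) (M q p))) := (Complex.continuous_conj.tendsto _).comp (hL q p)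
    have hmul := h0.mul hconjlim
    rw [zero_mul] at hmul
    refine hmul.congr' ?_
    filter_upwards [hAconj] with σ hc
    rw [map_mul, map_pow, hconj_e, ← hc p q, ← mul_assoc, ← pow_add]
    congr 2
    omega
  -- symmetry of limits
  have hMsym : ∀ p q, μ p = μ q → M q p = (starRingEnd ℂ) (M p q) := by
    intro p q hpq
    refine tendsto_nhds_unique (hL q p) ?_
    have h1 : Tendsto (fun σ : ℝ => (starRingEnd ℂ) (e σ ^ (μ p) * A p q σ)) (𝓝[≠] σ₀)
        (𝓝 ((starRingEnd ℂ) (M p q))) := (Complex.continuous_conj.tendsto _).comp (hL p q)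
    refine h1.congr' ?_
    filter_upwards [hAconj] with σ hc
    rw [map_mul, map_pow, hconj_e, hpq, ← hc q p]
  -- quadratic positivity
  have hquad : ∀ (co : ℂ) (k : Fin d), ∀ᶠ σ : ℝ in 𝓝[≠] σ₀,
      0 ≤ (A j j σ + co * A j k σ + (starRingEnd ℂ) co * A k j σ +
        (co * (starRingEnd ℂ) co) * A k k σ).re := by
    intro co k
    filter_upwards [hβψR, hposR] with σ hb hp
    have key : (inner ℂ (ψ j (σ:ℂ) + co • ψ k (σ:ℂ))
        ((P (σ:ℂ)) (ψ j (σ:ℂ) + co • ψ k (σ:ℂ))) : ℂ)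
        = A j j σ + co * A j k σ + (starRingEnd ℂ) co * A k j σ +
          (co * (starRingEnd ℂ) co) * A k k σ := by
      rw [map_add, map_smul, ← hb j, ← hb k, hA]
      simp only [inner_add_left, inner_add_right, inner_smul_left, inner_smul_right]
      ring
    rw [← key]
    exact hp _
  -- the key vanishing for equal (odd) multiplicities
  have hEk : ∀ k, μ k = m → M j k = 0 := by
    intro k hk
    have hElim : ∀ co : ℂ, Tendsto (fun σ : ℝ => e σ ^ m *
        (A j j σ + co * A j k σ + (starRingEnd ℂ) co * A k j σ +
          (co * (starRingEnd ℂ) co) * A k k σ)) (𝓝[≠] σ₀)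
        (𝓝 (M j j + co * M j k + (starRingEnd ℂ) co * M k j +
          (co * (starRingEnd ℂ) co) * M k k)) := by
      intro co
      have h1 := hL j j
      have h2 := hL j k
      have h3 := hL k j
      have h4 := hL k k
      rw [← hm] at h1 h2
      rw [hk] at h3 h4
      have hcomb := ((h1.add (h2.const_mul co)).add
        (h3.const_mul ((starRingEnd ℂ) co))).add (h4.const_mul (co * (starRingEnd ℂ) co))
      refine Tendsto.congr (fun σ => ?_) hcomb
      ring
    have hre : ∀ co : ℂ, (M j j + co * M j k + (starRingEnd ℂ) co * M k j +
        (co * (starRingEnd ℂ) co) * M k k).re = 0 := by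
      intro co
      have hlim := (Complex.continuous_re.tendsto _).comp (hElim co)
      have hIoile : 𝓝[>] σ₀ ≤ 𝓝[≠] σ₀ := nhdsWithin_mono _ fun x hx => ne_of_gt hx
      have hIiole : 𝓝[<] σ₀ ≤ 𝓝[≠] σ₀ := nhdsWithin_mono _ fun x hx => ne_of_lt hx
      have hq := hquad co k
      have hge : 0 ≤ (M j j + co * M j k + (starRingEnd ℂ) co * M k j +
          (co * (starRingEnd ℂ) co) * M k k).re := by
        refine ge_of_tendsto (hlim.mono_left hIoile) ?_
        filter_upwards [hq.filter_mono hIoile, self_mem_nhdsWithin] with σ hσ hσ'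
        have hpow : (0:ℝ) ≤ (σ - σ₀) ^ m := le_of_lt (pow_pos (sub_pos.mpr hσ') m)
        show 0 ≤ (e σ ^ m * _).re
        rw [heσ, ← Complex.ofReal_pow, Complex.re_ofReal_mul]
        exact mul_nonneg hpow hσ
      have hle' : (M j j + co * M j k + (starRingEnd ℂ) co * M k j +
          (co * (starRingEnd ℂ) co) * M k k).re ≤ 0 := by
        refine le_of_tendsto (hlim.mono_left hIiole) ?_
        filter_upwards [hq.filter_mono hIiole, self_mem_nhdsWithin] with σ hσ hσ'
        have hpow : (σ - σ₀) ^ m < 0 := Odd.pow_neg hmodd (sub_neg.mpr hσ')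
        show (e σ ^ m * _).re ≤ 0
        rw [heσ, ← Complex.ofReal_pow, Complex.re_ofReal_mul]
        exact mul_nonpos_iff.mpr (Or.inr ⟨hpow.le, hσ⟩)
      linarith
    have hkj : M k j = (starRingEnd ℂ) (M j k) := hMsym j k (by rw [← hm, hk])
    have h0' := hre 0
    have h1 := hre ((starRingEnd ℂ) (M j k))
    have h2 := hre (2 * (starRingEnd ℂ) (M j k))
    rw [hkj] at h1 h2
    simp only [zero_mul, map_zero, add_zero, mul_zero] at h0'
    simp only [map_mul, Complex.conj_conj, map_ofNat] at h1 h2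
    simp only [Complex.add_re, Complex.mul_re, Complex.mul_im, Complex.conj_re,
      Complex.conj_im, Complex.ofReal_re, Complex.ofReal_im, Complex.re_ofNat,
      Complex.im_ofNat] at h0' h1 h2
    ring_nf at h0' h1 h2
    apply Complex.ext <;> simp only [Complex.zero_re, Complex.zero_im] <;>
      nlinarith [sq_nonneg (M j k).re, sq_nonneg (M j k).im, h0', h1, h2]
  -- dimension count contradiction
  have hjk : ∀ k, μ k ≤ m → M j k = 0 := by
    intro k hkle
    rcases lt_or_eq_of_le hkle with hlt | heq
    · exact hD j k (by omega)
    · exact hEk k heq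
  set Sle : Finset (Fin d) := Finset.univ.filter (fun k => μ k ≤ m) with hSle
  set Sgt : Finset (Fin d) := Finset.univ.filter (fun k => m < μ k) with hSgt
  have hjnot : j ∉ Sgt := by
    simp only [hSgt, Finset.mem_filter, Finset.mem_univ, true_and]
    omega
  set T : Finset (Fin d) := insert j Sgt with hT
  have hMT : ∀ p ∈ T, ∀ k ∈ Sle, M p k = 0 := by
    intro p hp k hkk
    have hkle : μ k ≤ m := by
      simpa only [hSle, Finset.mem_filter, Finset.mem_univ, true_and] using hkk
    rcases Finset.mem_insert.mp hp with rfl | hpgt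
    · exact hjk k hkle
    · have hgt : m < μ p := by
        simpa only [hSgt, Finset.mem_filter, Finset.mem_univ, true_and] using hpgt
      exact hD p k (by omega)
  set W : Submodule ℂ K :=
    Submodule.span ℂ (Set.range ((fun q => β q ((σ₀ : ℝ) : ℂ)) ∘
      (Subtype.val : {x // x ∈ Sle} → Fin d))) with hW
  have hWrank : finrank ℂ W = Sle.card := by
    rw [hW]
    have h1 := finrank_span_eq_card
      (hβind.comp (Subtype.val : {x // x ∈ Sle} → Fin d) Subtype.val_injective)
    exact h1.trans (Fintype.card_coe _)
  have hmemT : ∀ p ∈ T, c p 0 ∈ Wᗮ := by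
    intro p hp
    rw [Submodule.mem_orthogonal']
    intro u hu
    have hle : W ≤ LinearMap.ker (innerSL ℂ (c p 0) : K →ₗ[ℂ] ℂ) := by
      rw [hW]
      apply Submodule.span_le.mpr
      rintro _ ⟨k, rfl⟩
      simp only [SetLike.mem_coe, LinearMap.mem_ker]
      show (inner ℂ (c p 0) (β k.1 ((σ₀ : ℝ) : ℂ)) : ℂ) = 0
      exact hMT p hp k.1 k.2
    have := LinearMap.mem_ker.mp (hle hu)
    simpa using this
  have hTrank : T.card ≤ finrank ℂ Wᗮ := by
    have hind := hcind.comp (Subtype.val : {x // x ∈ T} → Fin d) Subtype.val_injective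
    have h1 := finrank_span_eq_card hind
    have hspan : Submodule.span ℂ (Set.range ((fun q => c q 0) ∘
        (Subtype.val : {x // x ∈ T} → Fin d))) ≤ Wᗮ :=
      Submodule.span_le.mpr (by rintro _ ⟨p, rfl⟩; exact hmemT p.1 p.2)
    have h2 := Submodule.finrank_mono hspan
    rw [h1, Fintype.card_coe] at h2
    exact h2
  have horth := Submodule.finrank_add_finrank_orthogonal W
  have hpart : Sle.card + Sgt.card = d := by
    have hp2 := Finset.card_filter_add_card_filter_not
      (s := (Finset.univ : Finset (Fin d))) (p := fun k => μ k ≤ m)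
    simp only [not_le] at hp2
    rw [hSle, hSgt]
    simpa using hp2
  have hTcard : T.card = Sgt.card + 1 := by
    rw [hT, Finset.card_insert_of_notMem hjnot]
  rw [hd, hWrank] at horth
  omega
end

section
/- Let u = u₊ x^{ib} + u₋ x^{−ib} and v = v₊ x^{ib} + v₋ x^{−ib} with b > 0 and complex coefficients, with Mellin transforms û(σ) = u₊Φ(σ−b)/(σ−b) + u₋Φ(σ+b)/(σ+b) (Φ entire with Φ(±b-shift values) normalized so Φ(0)conj(Φ(0)) = 1). Then for γ a positively oriented simple closed curve around both b and −b, (1/2π) ∮_γ (σ² − b²) û(σ) conj(v̂(σ̄)) dσ = 2bi (u₊ conj(v₊) − u₋ conj(v₋)). Consequently, such a u satisfies the vanishing [u,u] = 0 if and only if |u₊| = |u₋|. -/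
open Complex Filter Metric



lemma conj_comp_conj_diff {Φ : ℂ → ℂ} (hΦ : Differentiable ℂ Φ) :
    Differentiable ℂ fun z => (starRingEnd ℂ) (Φ ((starRingEnd ℂ) z)) := by
  intro z
  have h := (hΦ ((starRingEnd ℂ) z)).hasDerivAt
  rw [hasDerivAt_iff_tendsto_slope] at h
  refine HasDerivAt.differentiableAt
    (f' := (starRingEnd ℂ) (deriv Φ ((starRingEnd ℂ) z))) ?_
  rw [hasDerivAt_iff_tendsto_slope]
  have h1 : Tendsto (starRingEnd ℂ) (nhdsWithin z {z}ᶜ)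
      (nhdsWithin ((starRingEnd ℂ) z) {(starRingEnd ℂ) z}ᶜ) := by
    rw [tendsto_nhdsWithin_iff]
    refine ⟨(Complex.continuous_conj.tendsto z).mono_left nhdsWithin_le_nhds, ?_⟩
    filter_upwards [self_mem_nhdsWithin] with y hy
    exact fun hc => hy ((starRingEnd ℂ).injective hc)
  have h2 := (Complex.continuous_conj.tendsto _).comp (h.comp h1)
  refine h2.congr' ?_
  filter_upwards [self_mem_nhdsWithin] with y hy
  simp only [Function.comp_apply, slope_def_field, map_div₀, map_sub, Complex.conj_conj]

lemma circleIntegral_add' {f g : ℂ → ℂ} {c : ℂ} {R : ℝ} (hf : CircleIntegrable f c R)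
    (hg : CircleIntegrable g c R) :
    (∮ z in C(c, R), (f z + g z)) = (∮ z in C(c, R), f z) + ∮ z in C(c, R), g z := by
  simp only [circleIntegral, smul_add, intervalIntegral.integral_add hf.out hg.out]

lemma key_residue (Φ : ℂ → ℂ) (hΦ : Differentiable ℂ Φ)
    (hnorm : Φ 0 * (starRingEnd ℂ) (Φ 0) = 1)
    (b : ℝ) (hb : 0 < b) (uP uM vP vM : ℂ) (ρ : ℝ) (hρ : b < ρ) :
    ((1 / (2 * Real.pi) : ℂ) *
        (∮ σ in C(0, ρ), (σ ^ 2 - (b : ℂ) ^ 2) *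
          (uP * (Φ (σ - b) / (σ - b)) + uM * (Φ (σ + b) / (σ + b))) *
          (starRingEnd ℂ) (vP * (Φ ((starRingEnd ℂ) σ - b) / ((starRingEnd ℂ) σ - b)) +
            vM * (Φ ((starRingEnd ℂ) σ + b) / ((starRingEnd ℂ) σ + b)))) =
      2 * (b : ℂ) * Complex.I * (uP * (starRingEnd ℂ) vP - uM * (starRingEnd ℂ) vM)) := by
  have hρ0 : (0:ℝ) ≤ ρ := le_of_lt (hb.trans hρ)
  set g : ℂ → ℂ := fun z => (starRingEnd ℂ) (Φ ((starRingEnd ℂ) z)) with hgdef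
  have hgd : Differentiable ℂ g := conj_comp_conj_diff hΦ
  set A : ℂ → ℂ := fun σ => uP * (starRingEnd ℂ) vP * ((σ + b) * (Φ (σ - b) * g (σ - b)))
  set B : ℂ → ℂ := fun σ => uM * (starRingEnd ℂ) vM * ((σ - b) * (Φ (σ + b) * g (σ + b)))
  set E : ℂ → ℂ := fun σ => uP * (starRingEnd ℂ) vM * (Φ (σ - b) * g (σ + b)) +
      uM * (starRingEnd ℂ) vP * (Φ (σ + b) * g (σ - b))
  have hΦm : Differentiable ℂ fun σ : ℂ => Φ (σ - b) := hΦ.comp (differentiable_id.sub_const _)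
  have hΦp : Differentiable ℂ fun σ : ℂ => Φ (σ + b) := hΦ.comp (differentiable_id.add_const _)
  have hgm : Differentiable ℂ fun σ : ℂ => g (σ - b) := hgd.comp (differentiable_id.sub_const _)
  have hgp : Differentiable ℂ fun σ : ℂ => g (σ + b) := hgd.comp (differentiable_id.add_const _)
  have hA : Differentiable ℂ A :=
    (differentiable_const _).mul ((differentiable_id.add_const _).mul (hΦm.mul hgm))
  have hB : Differentiable ℂ B :=
    (differentiable_const _).mul ((differentiable_id.sub_const _).mul (hΦp.mul hgp))
  have hE : Differentiable ℂ E :=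
    (((differentiable_const _).mul (hΦm.mul hgp)).add
      ((differentiable_const _).mul (hΦp.mul hgm)))
  -- points on the sphere avoid ±b
  have hsph : ∀ σ : ℂ, σ ∈ sphere (0:ℂ) ρ → σ - b ≠ 0 ∧ σ + b ≠ 0 := by
    intro σ hσ
    rw [mem_sphere_zero_iff_norm] at hσ
    constructor
    · intro h
      rw [sub_eq_zero] at h
      rw [h] at hσ
      simp only [Complex.norm_real, Real.norm_eq_abs, abs_of_pos hb] at hσ
      exact (lt_irrefl _ (hσ ▸ hρ)).elim
    · intro h
      have : σ = -b := by linear_combination h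
      rw [this] at hσ
      simp only [norm_neg, Complex.norm_real, Real.norm_eq_abs, abs_of_pos hb] at hσ
      exact (lt_irrefl _ (hσ ▸ hρ)).elim
  -- integrand equality on the sphere
  have e1 : ∀ σ : ℂ, (starRingEnd ℂ) (Φ ((starRingEnd ℂ) σ - b) / ((starRingEnd ℂ) σ - b)) =
      g (σ - b) / (σ - b) := by
    intro σ
    rw [map_div₀]
    congr 1
    · simp only [hgdef]
      congr 2
      simp [map_sub, Complex.conj_ofReal]
    · simp [map_sub, Complex.conj_ofReal]
  have e2 : ∀ σ : ℂ, (starRingEnd ℂ) (Φ ((starRingEnd ℂ) σ + b) / ((starRingEnd ℂ) σ + b)) =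
      g (σ + b) / (σ + b) := by
    intro σ
    rw [map_div₀]
    congr 1
    · simp only [hgdef]
      congr 2
      simp [map_add, Complex.conj_ofReal]
    · simp [map_add, Complex.conj_ofReal]
  have hcong : Set.EqOn
      (fun σ : ℂ => (σ ^ 2 - (b : ℂ) ^ 2) *
          (uP * (Φ (σ - b) / (σ - b)) + uM * (Φ (σ + b) / (σ + b))) *
          (starRingEnd ℂ) (vP * (Φ ((starRingEnd ℂ) σ - b) / ((starRingEnd ℂ) σ - b)) +
            vM * (Φ ((starRingEnd ℂ) σ + b) / ((starRingEnd ℂ) σ + b))))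
      (fun σ : ℂ => (σ - b)⁻¹ * A σ + ((σ + b)⁻¹ * B σ + E σ)) (sphere (0:ℂ) ρ) := by
    intro σ hσ
    obtain ⟨hm, hp⟩ := hsph σ hσ
    simp only [map_add, map_mul, e1, e2]
    field_simp [A, B, E]
    ring
  rw [show (∮ σ in C(0, ρ), (σ ^ 2 - (b : ℂ) ^ 2) *
          (uP * (Φ (σ - b) / (σ - b)) + uM * (Φ (σ + b) / (σ + b))) *
          (starRingEnd ℂ) (vP * (Φ ((starRingEnd ℂ) σ - b) / ((starRingEnd ℂ) σ - b)) +
            vM * (Φ ((starRingEnd ℂ) σ + b) / ((starRingEnd ℂ) σ + b)))) =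
      ∮ σ in C(0, ρ), ((σ - b)⁻¹ * A σ + ((σ + b)⁻¹ * B σ + E σ)) from
    circleIntegral.integral_congr hρ0 hcong]
  -- integrability
  have hcontA : ContinuousOn (fun σ : ℂ => (σ - b)⁻¹ * A σ) (sphere (0:ℂ) ρ) := by
    refine ContinuousOn.mul (ContinuousOn.inv₀ (by fun_prop) fun σ hσ => (hsph σ hσ).1)
      hA.continuous.continuousOn
  have hcontB : ContinuousOn (fun σ : ℂ => (σ + b)⁻¹ * B σ) (sphere (0:ℂ) ρ) := by
    refine ContinuousOn.mul (ContinuousOn.inv₀ (by fun_prop) fun σ hσ => (hsph σ hσ).2)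
      hB.continuous.continuousOn
  have hiA : CircleIntegrable (fun σ : ℂ => (σ - b)⁻¹ * A σ) 0 ρ := hcontA.circleIntegrable hρ0
  have hiB : CircleIntegrable (fun σ : ℂ => (σ + b)⁻¹ * B σ) 0 ρ := hcontB.circleIntegrable hρ0
  have hiE : CircleIntegrable E 0 ρ := hE.continuous.continuousOn.circleIntegrable hρ0
  have hiBE : CircleIntegrable (fun σ : ℂ => (σ + (b:ℂ))⁻¹ * B σ + E σ) 0 ρ := hiB.add hiE
  rw [circleIntegral_add' hiA hiBE, circleIntegral_add' hiB hiE]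

  -- evaluate the three integrals
  have hbmem : (b : ℂ) ∈ ball (0:ℂ) ρ := by
    simp [mem_ball_zero_iff, Complex.norm_real, Real.norm_eq_abs, abs_of_pos hb, hρ]
  have hbmem' : (-(b:ℂ)) ∈ ball (0:ℂ) ρ := by
    simp [mem_ball_zero_iff, Complex.norm_real, Real.norm_eq_abs, abs_of_pos hb, hρ]
  have hIA : (∮ σ in C(0, ρ), (σ - (b:ℂ))⁻¹ * A σ) = (2 * Real.pi * Complex.I) * A b := by
    have := (hA.diffContOnCl (s := ball (0:ℂ) ρ)).circleIntegral_sub_inv_smul hbmem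
    simpa [smul_eq_mul] using this
  have hIB : (∮ σ in C(0, ρ), (σ + (b:ℂ))⁻¹ * B σ) = (2 * Real.pi * Complex.I) * B (-b) := by
    have := (hB.diffContOnCl (s := ball (0:ℂ) ρ)).circleIntegral_sub_inv_smul hbmem'
    simpa [smul_eq_mul, sub_neg_eq_add] using this
  have hIE : (∮ σ in C(0, ρ), E σ) = 0 :=
    Complex.circleIntegral_eq_zero_of_differentiable_on_off_countable hρ0 Set.countable_empty
      hE.continuous.continuousOn (fun z _ => hE z)
  rw [hIA, hIB, hIE]
  have hg0 : Φ 0 * g 0 = 1 := by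
    have : g 0 = (starRingEnd ℂ) (Φ 0) := by simp [hgdef]
    rw [this]; exact hnorm
  have hAb : A b = uP * (starRingEnd ℂ) vP * (2 * b) := by
    simp only [A, sub_self, hg0, mul_one]
    ring
  have hBb : B (-b) = -(uM * (starRingEnd ℂ) vM * (2 * b)) := by
    simp only [B, neg_add_cancel, hg0, mul_one]
    ring
  rw [hAb, hBb]
  have hπ : (Real.pi : ℂ) ≠ 0 := Complex.ofReal_ne_zero.mpr Real.pi_ne_zero
  field_simp
  ring

/-- Residue computation for the pairing at the two simple real poles `±b`: with
`û(σ) = u₊Φ(σ−b)/(σ−b) + u₋Φ(σ+b)/(σ+b)` (`Φ` entire with `Φ(0)conj(Φ(0)) = 1`) and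
`γ` a positively oriented circle enclosing both `b` and `−b`, one has
`(1/2π) ∮_γ (σ²−b²) û(σ) conj(v̂(σ̄)) dσ = 2bi (u₊ conj v₊ − u₋ conj v₋)`;
consequently `[u,u] = 0` iff `|u₊| = |u₋|`. -/
theorem stmt_18 (Φ : ℂ → ℂ) (hΦ : Differentiable ℂ Φ)
    (hnorm : Φ 0 * (starRingEnd ℂ) (Φ 0) = 1)
    (b : ℝ) (hb : 0 < b) (uP uM vP vM : ℂ) :
    ∀ ρ : ℝ, b < ρ →
      ((1 / (2 * Real.pi) : ℂ) *
          (∮ σ in C(0, ρ), (σ ^ 2 - (b : ℂ) ^ 2) *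
            (uP * (Φ (σ - b) / (σ - b)) + uM * (Φ (σ + b) / (σ + b))) *
            (starRingEnd ℂ) (vP * (Φ ((starRingEnd ℂ) σ - b) / ((starRingEnd ℂ) σ - b)) +
              vM * (Φ ((starRingEnd ℂ) σ + b) / ((starRingEnd ℂ) σ + b)))) =
        2 * (b : ℂ) * Complex.I * (uP * (starRingEnd ℂ) vP - uM * (starRingEnd ℂ) vM)) ∧
      (((1 / (2 * Real.pi) : ℂ) *
          (∮ σ in C(0, ρ), (σ ^ 2 - (b : ℂ) ^ 2) *
            (uP * (Φ (σ - b) / (σ - b)) + uM * (Φ (σ + b) / (σ + b))) *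
            (starRingEnd ℂ) (uP * (Φ ((starRingEnd ℂ) σ - b) / ((starRingEnd ℂ) σ - b)) +
              uM * (Φ ((starRingEnd ℂ) σ + b) / ((starRingEnd ℂ) σ + b)))) = 0)
        ↔ ‖uP‖ = ‖uM‖) := by
  intro ρ hρ
  refine ⟨key_residue Φ hΦ hnorm b hb uP uM vP vM ρ hρ, ?_⟩
  rw [key_residue Φ hΦ hnorm b hb uP uM uP uM ρ hρ]
  have h2b : (2 * (b:ℂ) * Complex.I) ≠ 0 := by
    simp [Complex.ofReal_ne_zero, hb.ne', Complex.I_ne_zero]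
  rw [mul_eq_zero, or_iff_right h2b, sub_eq_zero, Complex.mul_conj, Complex.mul_conj]
  rw [Complex.ofReal_inj]
  rw [← Complex.sq_norm, ← Complex.sq_norm]
  exact sq_eq_sq₀ (norm_nonneg _) (norm_nonneg _)
end

section
/- Let H₁ ↪ H be Hilbert spaces with H₁ continuously embedded in H, let A : D ⊆ H → H be a closed operator whose domain D (with graph norm) embeds compactly into H, and suppose there is a bounded operator Q : H → H₁ and a bounded operator R : H₁ → H₁ with Q∘A = I + R on D ∩ H₁, where I + R : H₁ → H₁ is Fredholm. If (u_n) ⊆ D ∩ H₁ with u_n → u in H and Au_n → f in H, then u ∈ H₁ and Au = f; i.e., A restricted to D ∩ H₁ is closed as an operator in H. -/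
/-- Abstract version of the closedness lemma: `H₁ ↪ H` continuously embedded Hilbert
spaces, `A` a closed operator whose domain embeds compactly into `H` (in the graph
norm), `Q : H → H₁` and `R : H₁ → H₁` bounded with `Q ∘ A = I + R` on `D ∩ H₁` and
`I + R : H₁ → H₁` Fredholm.  If `(u_n) ⊆ D ∩ H₁`, `u_n → u` in `H` and `A u_n → f` in
`H`, then `u ∈ H₁`, `u ∈ D` and `Au = f`; i.e. `A` restricted to `D ∩ H₁` is closed. -/
theorem stmt_19 {H H₁ : Type*}
    [NormedAddCommGroup H] [InnerProductSpace ℂ H] [CompleteSpace H]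
    [NormedAddCommGroup H₁] [InnerProductSpace ℂ H₁] [CompleteSpace H₁]
    (J : H₁ →L[ℂ] H) (hJinj : Function.Injective J)
    (A : H →ₗ.[ℂ] H) (hAclosed : IsClosed (A.graph : Set (H × H)))
    (hcpt : ∀ u : ℕ → A.domain, (∃ C : ℝ, ∀ n, ‖(u n : H)‖ + ‖A (u n)‖ ≤ C) →
      ∃ φ : ℕ → ℕ, StrictMono φ ∧ ∃ x : H,
        Filter.Tendsto (fun n => ((u (φ n) : H))) Filter.atTop (nhds x))
    (Q : H →L[ℂ] H₁) (R : H₁ →L[ℂ] H₁)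
    [FiniteDimensional ℂ (LinearMap.ker (((1 : H₁ →L[ℂ] H₁) + R : H₁ →L[ℂ] H₁) : H₁ →ₗ[ℂ] H₁))]
    [FiniteDimensional ℂ (H₁ ⧸ LinearMap.range (((1 : H₁ →L[ℂ] H₁) + R : H₁ →L[ℂ] H₁) : H₁ →ₗ[ℂ] H₁))]
    (hrange : IsClosed (LinearMap.range (((1 : H₁ →L[ℂ] H₁) + R : H₁ →L[ℂ] H₁) : H₁ →ₗ[ℂ] H₁) : Set H₁))
    (hQA : ∀ (x : A.domain) (w : H₁), J w = (x : H) → Q (A x) = w + R w)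
    (un : ℕ → A.domain) (wn : ℕ → H₁) (hw : ∀ n, J (wn n) = (un n : H))
    (u f : H)
    (hu : Filter.Tendsto (fun n => ((un n : H))) Filter.atTop (nhds u))
    (hf : Filter.Tendsto (fun n => A (un n)) Filter.atTop (nhds f)) :
    ∃ (hud : u ∈ A.domain) (w : H₁), J w = u ∧ A ⟨u, hud⟩ = f := by

  classical
  -- Part 1: closedness of A gives u ∈ domain and A u = f
  have hgraph : (u, f) ∈ A.graph := by
    refine hAclosed.mem_of_tendsto (hu.prodMk_nhds hf) ?_
    exact Filter.Eventually.of_forall fun n => A.mem_graph (un n)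
  rw [LinearPMap.mem_graph_iff] at hgraph
  obtain ⟨x, hx, hAx⟩ := hgraph
  have hx' : (x : H) = u := hx
  have hud : u ∈ A.domain := hx' ▸ x.2
  have hxu : (⟨u, hud⟩ : A.domain) = x := Subtype.ext hx'.symm
  -- Part 2: Fredholm argument to show u is in the image of J
  set T : H₁ →L[ℂ] H₁ := (1 : H₁ →L[ℂ] H₁) + R with hT
  have hTw : ∀ n, T (wn n) = Q (A (un n)) := by
    intro n
    have := hQA (un n) (wn n) (hw n)
    simp [hT, ContinuousLinearMap.add_apply, this]
  have hconv : Filter.Tendsto (fun n => T (wn n)) Filter.atTop (nhds (Q f)) := by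
    have := (Q.continuous.tendsto f).comp hf
    simpa [Function.comp_def, hTw] using this
  have hQf_mem : Q f ∈ LinearMap.range (T : H₁ →ₗ[ℂ] H₁) :=
    hrange.mem_of_tendsto hconv (Filter.Eventually.of_forall fun n => ⟨wn n, rfl⟩)
  set K : Submodule ℂ H₁ := LinearMap.ker (T : H₁ →ₗ[ℂ] H₁) with hK
  haveI : FiniteDimensional ℂ K := ‹FiniteDimensional ℂ (LinearMap.ker (((1 : H₁ →L[ℂ] H₁) + R : H₁ →L[ℂ] H₁) : H₁ →ₗ[ℂ] H₁))›
  set M : Submodule ℂ H₁ := Kᗮ with hM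
  haveI : CompleteSpace M := (Submodule.isClosed_orthogonal K).completeSpace_coe
  haveI : CompleteSpace (LinearMap.range (T : H₁ →ₗ[ℂ] H₁)) := hrange.completeSpace_coe
  set S : M →L[ℂ] (LinearMap.range (T : H₁ →ₗ[ℂ] H₁)) :=
    (T.comp M.subtypeL).codRestrict (LinearMap.range (T : H₁ →ₗ[ℂ] H₁)) (fun x => ⟨x, rfl⟩) with hS
  have hSinj : LinearMap.ker (S : M →ₗ[ℂ] LinearMap.range (T : H₁ →ₗ[ℂ] H₁)) = ⊥ := by
    rw [LinearMap.ker_eq_bot]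
    intro a b hab
    have ha : T (a : H₁) = T (b : H₁) := congrArg Subtype.val hab
    have hmem : ((a : H₁) - (b : H₁)) ∈ K := by
      simp [hK, LinearMap.mem_ker, map_sub, ha]
    have hmem' : ((a : H₁) - (b : H₁)) ∈ M := M.sub_mem a.2 b.2
    have h0 : ((a : H₁) - (b : H₁)) ∈ (⊥ : Submodule ℂ H₁) :=
      (K.orthogonal_disjoint).le_bot ⟨hmem, hmem'⟩
    exact Subtype.ext (sub_eq_zero.mp (by simpa using h0))
  have hSsurj : LinearMap.range (S : M →ₗ[ℂ] LinearMap.range (T : H₁ →ₗ[ℂ] H₁)) = ⊤ := by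
    rw [LinearMap.range_eq_top]
    rintro ⟨y, v, hv⟩
    refine ⟨⟨v - (Submodule.orthogonalProjection K v : H₁), ?_⟩, ?_⟩
    · exact Submodule.sub_starProjection_mem_orthogonal (K := K) v
    · apply Subtype.ext
      have hk : ((Submodule.orthogonalProjection K v : H₁)) ∈ K := (Submodule.orthogonalProjection K v).2
      have : T ((Submodule.orthogonalProjection K v : H₁)) = 0 := hk
      simp only [hS, ContinuousLinearMap.coe_coe, ContinuousLinearMap.coe_codRestrict_apply,
        ContinuousLinearMap.comp_apply, Submodule.subtypeL_apply, map_sub, this, sub_zero]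
      change T (v - _) = y
      rw [map_sub, this, sub_zero]
      exact hv
  let e : M ≃L[ℂ] (LinearMap.range (T : H₁ →ₗ[ℂ] H₁)) := ContinuousLinearEquiv.ofBijective S hSinj hSsurj
  set m : M := e.symm ⟨Q f, hQf_mem⟩ with hm
  have hmn_t : Filter.Tendsto
      (fun n => (e.symm ⟨T (wn n), ⟨wn n, rfl⟩⟩ : M)) Filter.atTop (nhds m) := by
    apply (e.symm.continuous.tendsto _).comp
    rw [tendsto_subtype_rng]
    exact hconv
  set mn : ℕ → M := fun n => e.symm ⟨T (wn n), ⟨wn n, rfl⟩⟩ with hmn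
  have hTmn : ∀ n, T ((mn n : H₁)) = T (wn n) := by
    intro n
    have h1 : e (mn n) = ⟨T (wn n), ⟨wn n, rfl⟩⟩ := e.apply_symm_apply _
    have h2 : S (mn n) = ⟨T (wn n), ⟨wn n, rfl⟩⟩ := by
      rwa [show ⇑e = ⇑S from ContinuousLinearEquiv.coeFn_ofBijective S hSinj hSsurj] at h1
    exact congrArg Subtype.val h2
  have hJm_t : Filter.Tendsto (fun n => J ((mn n : H₁))) Filter.atTop (nhds (J (m : H₁))) :=
    (J.continuous.tendsto _).comp ((continuous_subtype_val.tendsto m).comp hmn_t)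
  have hJk_t : Filter.Tendsto (fun n => J (wn n - (mn n : H₁))) Filter.atTop
      (nhds (u - J (m : H₁))) := by
    simpa [map_sub, hw] using (hu.sub hJm_t)
  have hmemK : ∀ n, wn n - (mn n : H₁) ∈ K := by
    intro n
    simp [hK, LinearMap.mem_ker, map_sub, hTmn n]
  have hclosed' : IsClosed ((K.map (J : H₁ →ₗ[ℂ] H)) : Set H) :=
    Submodule.closed_of_finiteDimensional _
  have hlim : u - J (m : H₁) ∈ K.map (J : H₁ →ₗ[ℂ] H) :=
    hclosed'.mem_of_tendsto hJk_t (Filter.Eventually.of_forall fun n => ⟨_, hmemK n, rfl⟩)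
  obtain ⟨k, hkK, hJk⟩ := hlim
  refine ⟨hud, (m : H₁) + k, ?_, ?_⟩
  · have : J k = u - J (m : H₁) := hJk
    rw [map_add, this]
    abel
  · rw [hxu]
    exact hAx
end
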